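/- arXiv:0910.0547 — 5 statements merged into one kernel-verified Lean document; each statement's English description precedes it below -/
import Mathlib

section
/- Let n ∈ ℕ and let B, B' ∈ A_n be adjacency matrices of two multigraphs on n vertices. If t_≤(A,B) = t_≤(A,B') for every k ∈ ℕ and every A ∈ A_k, then the two multigraphs are isomorphic: there exists a permutation τ of [n] such that B'(i,j) = B(τ(i),τ(j)) for all i,j ∈ [n]. -/
open scoped Classical BigOperators

/-- `A ∈ A_k`: adjacency matrix of a multigraph on `k` labeled vertices. -/
def IsAdj {k : ℕ} (A : Matrix (Fin k) (Fin k) ℕ) : Prop :=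
  (∀ i j, A i j = A j i) ∧ ∀ i, Even (A i i)

/-- Homomorphism density
`t_≤(A,B) = n^{−k} ∑_{φ:[k]→[n]} 1[∀ i,j : A(i,j) ≤ B(φ(i),φ(j))]`. -/
noncomputable def homDensity {k n : ℕ} (A : Matrix (Fin k) (Fin k) ℕ)
    (B : Matrix (Fin n) (Fin n) ℕ) : ℝ :=
  (1 / (n : ℝ) ^ k) *
    ∑ φ : Fin k → Fin n, (if ∀ i j, A i j ≤ B (φ i) (φ j) then (1 : ℝ) else 0)

namespace HDM

variable {n : ℕ}

def patt (B C : Matrix (Fin n) (Fin n) ℕ) (S : Finset (Fin n)) (φ : Fin n → Fin n) : Prop :=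
  ∀ x ∈ S, ∀ y ∈ S, B (φ x) (φ y) = C x y

noncomputable def eqCnt (B C : Matrix (Fin n) (Fin n) ℕ) (S : Finset (Fin n)) : ℕ :=
  (Finset.univ.filter fun φ : Fin n → Fin n => patt B C S φ).card

noncomputable def leCnt (B C : Matrix (Fin n) (Fin n) ℕ) (S : Finset (Fin n)) : ℕ :=
  (Finset.univ.filter fun φ : Fin n → Fin n =>
    ∀ x ∈ S, ∀ y ∈ S, C x y ≤ B (φ x) (φ y)).card

def AdjOn (C : Matrix (Fin n) (Fin n) ℕ) (S : Finset (Fin n)) : Prop :=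
  (∀ x ∈ S, ∀ y ∈ S, C x y = C y x) ∧ ∀ x ∈ S, Even (C x x)

def nf (B : Matrix (Fin n) (Fin n) ℕ) (S : Finset (Fin n)) (φ : Fin n → Fin n) :
    Matrix (Fin n) (Fin n) ℕ :=
  fun x y => if x ∈ S ∧ y ∈ S then B (φ x) (φ y) else 0

def wt (C : Matrix (Fin n) (Fin n) ℕ) (S : Finset (Fin n)) : ℕ :=
  ∑ p ∈ S ×ˢ S, C p.1 p.2

def scope (S : Finset (Fin n)) (m : ℕ) : Finset (Fin n) :=
  S.filter fun x => (x : ℕ) < m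

def injOn (φ : Fin n → Fin n) (T : Finset (Fin n)) : Prop :=
  ∀ x ∈ T, ∀ y ∈ T, φ x = φ y → x = y

noncomputable def injCnt (B C : Matrix (Fin n) (Fin n) ℕ) (S : Finset (Fin n)) (m : ℕ) : ℕ :=
  (Finset.univ.filter fun φ : Fin n → Fin n =>
    patt B C S φ ∧ injOn φ (scope S m)).card

lemma L1 (hn : 0 < n) (B B' : Matrix (Fin n) (Fin n) ℕ)
    (h : ∀ (k : ℕ) (A : Matrix (Fin k) (Fin k) ℕ), IsAdj A →
      homDensity A B = homDensity A B')
    (C : Matrix (Fin n) (Fin n) ℕ) (S : Finset (Fin n)) (hC : AdjOn C S) :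
    leCnt B C S = leCnt B' C S := by
  set A : Matrix (Fin n) (Fin n) ℕ := fun x y => if x ∈ S ∧ y ∈ S then C x y else 0 with hA
  have hAdj : IsAdj A := by
    constructor
    · intro i j
      by_cases hi : i ∈ S ∧ j ∈ S
      · simp [hA, hi, hi.1, hi.2, hC.1 i hi.1 j hi.2]
      · have : ¬ (j ∈ S ∧ i ∈ S) := fun ⟨a, b⟩ => hi ⟨b, a⟩
        simp [hA, hi, this]
    · intro i
      by_cases hi : i ∈ S
      · simpa [hA, hi] using hC.2 i hi
      · simp [hA, hi]
  have key := h n A hAdj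
  have hcond : ∀ (D : Matrix (Fin n) (Fin n) ℕ) (φ : Fin n → Fin n),
      (∀ i j, A i j ≤ D (φ i) (φ j)) ↔ (∀ x ∈ S, ∀ y ∈ S, C x y ≤ D (φ x) (φ y)) := by
    intro D φ
    constructor
    · intro hh x hx y hy
      have := hh x y
      simpa [hA, hx, hy] using this
    · intro hh i j
      by_cases hij : i ∈ S ∧ j ∈ S
      · simpa [hA, hij] using hh i hij.1 j hij.2
      · simp [hA, hij]
  have sums : ∀ D : Matrix (Fin n) (Fin n) ℕ,
      (∑ φ : Fin n → Fin n, (if ∀ i j, A i j ≤ D (φ i) (φ j) then (1 : ℝ) else 0))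
        = (leCnt D C S : ℝ) := by
    intro D
    rw [leCnt]
    rw [← Finset.sum_boole]
    refine Finset.sum_congr rfl fun φ _ => ?_
    by_cases hφ : ∀ x ∈ S, ∀ y ∈ S, C x y ≤ D (φ x) (φ y)
    · rw [if_pos ((hcond D φ).2 hφ), if_pos hφ]
    · have : ¬ (∀ i j, A i j ≤ D (φ i) (φ j)) := fun hh => hφ ((hcond D φ).1 hh)
      simp [hφ, this]
  have key : (1 / (n : ℝ) ^ n) * (leCnt B C S : ℝ) = (1 / (n : ℝ) ^ n) * (leCnt B' C S : ℝ) :=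
    by rw [← sums B, ← sums B']; convert key using 1 <;> (unfold homDensity; congr 1; exact Finset.sum_congr rfl fun φ _ => by split_ifs <;> rfl)
  have hne : (1 / (n : ℝ) ^ n) ≠ 0 := by
    apply one_div_ne_zero
    exact pow_ne_zero _ (Nat.cast_ne_zero.mpr hn.ne')
  exact_mod_cast mul_left_cancel₀ hne key

lemma L3 (hn : 0 < n) (B B' : Matrix (Fin n) (Fin n) ℕ)
    (hB : IsAdj B) (hB' : IsAdj B')
    (h : ∀ (k : ℕ) (A : Matrix (Fin k) (Fin k) ℕ), IsAdj A →
      homDensity A B = homDensity A B')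
    (C : Matrix (Fin n) (Fin n) ℕ) (S : Finset (Fin n)) (hC : AdjOn C S) :
    eqCnt B C S = eqCnt B' C S := by
  set M : ℕ := (∑ a : Fin n, ∑ b : Fin n, B a b) + (∑ a : Fin n, ∑ b : Fin n, B' a b) with hM
  have hMB : ∀ a b, B a b ≤ M := by
    intro a b
    have h1 : B a b ≤ ∑ b' : Fin n, B a b' :=
      Finset.single_le_sum (fun _ _ => Nat.zero_le _) (Finset.mem_univ b)
    have h2 : (∑ b' : Fin n, B a b') ≤ ∑ a' : Fin n, ∑ b' : Fin n, B a' b' :=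
      Finset.single_le_sum (f := fun a' => ∑ b' : Fin n, B a' b')
        (fun _ _ => Nat.zero_le _) (Finset.mem_univ a)
    omega
  have hMB' : ∀ a b, B' a b ≤ M := by
    intro a b
    have h1 : B' a b ≤ ∑ b' : Fin n, B' a b' :=
      Finset.single_le_sum (fun _ _ => Nat.zero_le _) (Finset.mem_univ b)
    have h2 : (∑ b' : Fin n, B' a b') ≤ ∑ a' : Fin n, ∑ b' : Fin n, B' a' b' :=
      Finset.single_le_sum (f := fun a' => ∑ b' : Fin n, B' a' b')
        (fun _ _ => Nat.zero_le _) (Finset.mem_univ a)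
    omega
  set bnd : ℕ := n * n * M with hbnd
  -- weight bound for realizable patterns
  have hwt : ∀ (D : Matrix (Fin n) (Fin n) ℕ), (∀ a b, D a b ≤ M) →
      ∀ (C' : Matrix (Fin n) (Fin n) ℕ) (S' : Finset (Fin n)) (φ : Fin n → Fin n),
      patt D C' S' φ → wt C' S' ≤ bnd := by
    intro D hD C' S' φ hp
    have : wt C' S' ≤ ∑ _p ∈ S' ×ˢ S', M := by
      apply Finset.sum_le_sum
      intro p hp'
      rcases Finset.mem_product.mp hp' with ⟨h1, h2⟩
      rw [← hp p.1 h1 p.2 h2]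
      exact hD _ _
    calc wt C' S' ≤ ∑ _p ∈ S' ×ˢ S', M := this
      _ = (S' ×ˢ S').card * M := by rw [Finset.sum_const, smul_eq_mul]
      _ ≤ (n * n) * M := by
          apply Nat.mul_le_mul_right
          rw [Finset.card_product]
          have := Finset.card_le_card (Finset.subset_univ S')
          simp only [Finset.card_univ, Fintype.card_fin] at this
          exact Nat.mul_le_mul this this
  suffices aux : ∀ (w : ℕ) (C' : Matrix (Fin n) (Fin n) ℕ) (S' : Finset (Fin n)),
      AdjOn C' S' → bnd + 1 ≤ wt C' S' + w → eqCnt B C' S' = eqCnt B' C' S' by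
    exact aux (bnd + 1) C S hC (by omega)
  intro w
  induction w with
  | zero =>
    intro C' S' _ hw
    have z : ∀ (D : Matrix (Fin n) (Fin n) ℕ), (∀ a b, D a b ≤ M) → eqCnt D C' S' = 0 := by
      intro D hD
      rw [eqCnt, Finset.card_eq_zero, Finset.filter_eq_empty_iff]
      intro φ _ hp
      have := hwt D hD C' S' φ hp
      omega
    rw [z B hMB, z B' hMB']
  | succ w ih =>
    intro C' S' hC' hw
    set t : Finset (Matrix (Fin n) (Fin n) ℕ) :=
      (Finset.univ.image (nf B S')) ∪ (Finset.univ.image (nf B' S')) with ht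
    have hmemB : ∀ φ, nf B S' φ ∈ t :=
      fun φ => Finset.mem_union_left _ (Finset.mem_image_of_mem _ (Finset.mem_univ φ))
    have hmemB' : ∀ φ, nf B' S' φ ∈ t :=
      fun φ => Finset.mem_union_right _ (Finset.mem_image_of_mem _ (Finset.mem_univ φ))
    have hnorm : ∀ E ∈ t, ∀ x y, ¬(x ∈ S' ∧ y ∈ S') → E x y = 0 := by
      intro E hE x y hxy
      rcases Finset.mem_union.mp hE with hE | hE <;>
      · rcases Finset.mem_image.mp hE with ⟨ψ, _, rfl⟩
        simp [nf, hxy]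
    have hAdjt : ∀ E ∈ t, AdjOn E S' := by
      intro E hE
      rcases Finset.mem_union.mp hE with hE | hE
      · rcases Finset.mem_image.mp hE with ⟨ψ, _, rfl⟩
        exact ⟨fun x hx y hy => by simp [nf, hx, hy, hB.1], fun x hx => by simpa [nf, hx] using hB.2 (ψ x)⟩
      · rcases Finset.mem_image.mp hE with ⟨ψ, _, rfl⟩
        exact ⟨fun x hx y hy => by simp [nf, hx, hy, hB'.1], fun x hx => by simpa [nf, hx] using hB'.2 (ψ x)⟩
    have hMt : ∀ E ∈ t, ∀ a b, E a b ≤ M := by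
      intro E hE a b
      rcases Finset.mem_union.mp hE with hE | hE
      · rcases Finset.mem_image.mp hE with ⟨ψ, _, rfl⟩
        by_cases hab : a ∈ S' ∧ b ∈ S' <;> simp [nf, hab, hMB]
      · rcases Finset.mem_image.mp hE with ⟨ψ, _, rfl⟩
        by_cases hab : a ∈ S' ∧ b ∈ S' <;> simp [nf, hab, hMB']
    set t₁ : Finset (Matrix (Fin n) (Fin n) ℕ) :=
      t.filter (fun E => ∀ x ∈ S', ∀ y ∈ S', C' x y ≤ E x y) with ht₁
    have decomp : ∀ D : Matrix (Fin n) (Fin n) ℕ, (∀ φ, nf D S' φ ∈ t) →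
        leCnt D C' S' = ∑ E ∈ t₁, eqCnt D E S' := by
      intro D hD
      rw [leCnt]
      rw [Finset.card_eq_sum_card_fiberwise (f := nf D S') (t := t₁) ?_]
      · apply Finset.sum_congr rfl
        intro E hE
        rcases Finset.mem_filter.mp hE with ⟨hEt, hEle⟩
        congr 1
        ext φ
        simp only [Finset.mem_filter, Finset.mem_univ, true_and, eqCnt]
        constructor
        · rintro ⟨_, rfl⟩
          intro x hx y hy
          simp [nf, hx, hy]
        · intro hp
          have hnf : nf D S' φ = E := by
            funext x y
            by_cases hxy : x ∈ S' ∧ y ∈ S'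
            · simp only [nf, if_pos hxy]
              exact hp x hxy.1 y hxy.2
            · simp only [nf, if_neg hxy]
              exact (hnorm E hEt x y hxy).symm
          refine ⟨?_, hnf⟩
          intro x hx y hy
          rw [hp x hx y hy]
          exact hEle x hx y hy
      · intro φ hφ
        simp only [Finset.coe_filter, Finset.mem_coe, Finset.mem_filter, Finset.mem_univ, true_and, Set.mem_setOf_eq] at hφ
        rw [Finset.mem_coe, ht₁, Finset.mem_filter]
        refine ⟨hD φ, ?_⟩
        intro x hx y hy
        simpa [nf, hx, hy] using hφ x hx y hy
    set C₀ : Matrix (Fin n) (Fin n) ℕ :=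
      (fun x y => if x ∈ S' ∧ y ∈ S' then C' x y else 0) with hC₀
    have epatt : ∀ D : Matrix (Fin n) (Fin n) ℕ, eqCnt D C' S' = eqCnt D C₀ S' := by
      intro D
      unfold eqCnt
      congr 1
      apply Finset.filter_congr
      intro φ _
      simp only [patt, hC₀]
      constructor
      · intro hp x hx y hy; rw [if_pos ⟨hx, hy⟩]; exact hp x hx y hy
      · intro hp x hx y hy; have := hp x hx y hy; rwa [if_pos ⟨hx, hy⟩] at this
    by_cases hC₀t : C₀ ∈ t
    · have hC₀t₁ : C₀ ∈ t₁ := by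
        rw [ht₁, Finset.mem_filter]
        exact ⟨hC₀t, fun x hx y hy => by rw [hC₀]; simp [hx, hy]⟩
      have key : ∀ E ∈ t₁.erase C₀, eqCnt B E S' = eqCnt B' E S' := by
        intro E hE
        rcases Finset.mem_erase.mp hE with ⟨hne, hEt₁⟩
        rcases Finset.mem_filter.mp hEt₁ with ⟨hEt, hEle⟩
        apply ih E S' (hAdjt E hEt)
        have hlt : wt C' S' < wt E S' := by
          have hle0 : ∀ p ∈ S' ×ˢ S', C' p.1 p.2 ≤ E p.1 p.2 := by
            intro p hp
            rcases Finset.mem_product.mp hp with ⟨h1, h2⟩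
            exact hEle p.1 h1 p.2 h2
          have hex : ∃ p ∈ S' ×ˢ S', C' p.1 p.2 < E p.1 p.2 := by
            by_contra hcon
            push_neg at hcon
            apply hne
            funext x y
            by_cases hxy : x ∈ S' ∧ y ∈ S'
            · have h1 : E x y ≤ C' x y := hcon (x, y) (Finset.mem_product.mpr hxy)
              have h2 := hEle x hxy.1 y hxy.2
              simp only [hC₀, if_pos hxy]
              omega
            · rw [hnorm E hEt x y hxy, hC₀]
              simp [hxy]
          exact Finset.sum_lt_sum hle0 hex
        omega
      have d1 := decomp B hmemB
      have d2 := decomp B' hmemB'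
      rw [← Finset.add_sum_erase _ _ hC₀t₁] at d1 d2
      have dle : leCnt B C' S' = leCnt B' C' S' := L1 hn B B' h C' S' hC'
      have sums : (∑ E ∈ t₁.erase C₀, eqCnt B E S') = ∑ E ∈ t₁.erase C₀, eqCnt B' E S' :=
        Finset.sum_congr rfl key
      rw [epatt B, epatt B']
      omega
    · have z : ∀ D : Matrix (Fin n) (Fin n) ℕ, (∀ φ, nf D S' φ ∈ t) → eqCnt D C' S' = 0 := by
        intro D hD
        rw [eqCnt, Finset.card_eq_zero, Finset.filter_eq_empty_iff]
        intro φ _ hp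
        apply hC₀t
        have : nf D S' φ = C₀ := by
          funext x y
          by_cases hxy : x ∈ S' ∧ y ∈ S'
          · simp only [nf, hC₀, if_pos hxy]
            exact hp x hxy.1 y hxy.2
          · simp [nf, hC₀, hxy]
        rw [← this]
        exact hD φ
      rw [z B hmemB, z B' hmemB']

lemma L4 (hn : 0 < n) (B B' : Matrix (Fin n) (Fin n) ℕ)
    (hL3 : ∀ (C : Matrix (Fin n) (Fin n) ℕ) (S : Finset (Fin n)), AdjOn C S →
      eqCnt B C S = eqCnt B' C S) :
    ∀ (m : ℕ) (C : Matrix (Fin n) (Fin n) ℕ) (S : Finset (Fin n)), AdjOn C S →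
      injCnt B C S m = injCnt B' C S m := by
  intro m
  induction m with
  | zero =>
    intro C S hC
    have e : ∀ D : Matrix (Fin n) (Fin n) ℕ, injCnt D C S 0 = eqCnt D C S := by
      intro D
      unfold injCnt eqCnt
      congr 1
      apply Finset.filter_congr
      intro φ _
      simp only [scope, injOn]
      constructor
      · exact fun hp => hp.1
      · intro hp
        refine ⟨hp, ?_⟩
        intro x hx
        simp at hx
    rw [e B, e B']
    exact hL3 C S hC
  | succ m ih =>
    intro C S hC
    by_cases hm : ∃ m' : Fin n, (m' : ℕ) = m ∧ m' ∈ S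
    · obtain ⟨m', hm'val, hm'S⟩ := hm
      -- basic facts
      have hscope_succ : scope S (m + 1) = insert m' (scope S m) := by
        ext x
        simp only [scope, Finset.mem_filter, Finset.mem_insert]
        constructor
        · rintro ⟨hxS, hlt⟩
          rcases Nat.lt_succ_iff_lt_or_eq.mp hlt with hlt | heq
          · exact Or.inr ⟨hxS, hlt⟩
          · exact Or.inl (Fin.ext (by omega))
        · rintro (rfl | ⟨hxS, hlt⟩)
          · exact ⟨hm'S, by omega⟩
          · exact ⟨hxS, by omega⟩
      have hm'notscope : m' ∉ scope S m := by
        simp [scope, hm'val]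
      have hscope_sub : scope S m ⊆ scope S (m + 1) := by
        rw [hscope_succ]; exact Finset.subset_insert _ _
      have hscope_erase : scope (S.erase m') m = scope S m := by
        ext x
        simp only [scope, Finset.mem_filter, Finset.mem_erase]
        constructor
        · rintro ⟨⟨_, hxS⟩, hlt⟩; exact ⟨hxS, hlt⟩
        · rintro ⟨hxS, hlt⟩
          exact ⟨⟨fun hxx => by subst hxx; omega, hxS⟩, hlt⟩
      have hiS : ∀ i ∈ scope S m, i ∈ S := fun i hi => (Finset.mem_filter.mp hi).1
      have hine : ∀ i ∈ scope S m, i ≠ m' := by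
        intro i hi hii
        subst hii
        exact hm'notscope hi
      -- the main counting identity, for a generic target D
      have main : ∀ D : Matrix (Fin n) (Fin n) ℕ,
          n * injCnt D C S m = n * injCnt D C S (m + 1) +
            ∑ i ∈ scope S m,
              (if (∀ y ∈ S, C m' y = C i y ∧ C y m' = C y i)
               then injCnt D C (S.erase m') m else 0) := by
        intro D
        set Am : Finset (Fin n → Fin n) :=
          Finset.univ.filter (fun φ => patt D C S φ ∧ injOn φ (scope S m)) with hAm
        set Am1 : Finset (Fin n → Fin n) :=
          Finset.univ.filter (fun φ => patt D C S φ ∧ injOn φ (scope S (m + 1))) with hAm1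
        have hsub : Am1 ⊆ Am := by
          intro φ hφ
          rw [hAm1, Finset.mem_filter] at hφ
          rw [hAm, Finset.mem_filter]
          refine ⟨hφ.1, hφ.2.1, ?_⟩
          intro x hx y hy
          exact hφ.2.2 x (hscope_sub hx) y (hscope_sub hy)
        set P : Fin n → Finset (Fin n → Fin n) := fun i =>
          Finset.univ.filter (fun φ =>
            patt D C S φ ∧ injOn φ (scope S m) ∧ φ m' = φ i) with hP
        have hsdiff : Am \ Am1 = (scope S m).biUnion P := by
          ext φ
          simp only [Finset.mem_sdiff, hAm, hAm1, hP, Finset.mem_biUnion, Finset.mem_filter,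
            Finset.mem_univ, true_and]
          constructor
          · rintro ⟨⟨hpatt, hinj⟩, hnot⟩
            have : ∃ i ∈ scope S m, φ m' = φ i := by
              by_contra hcon
              push_neg at hcon
              apply hnot
              refine ⟨hpatt, ?_⟩
              intro x hx y hy hxy
              rw [hscope_succ, Finset.mem_insert] at hx hy
              rcases hx with rfl | hx
              · rcases hy with rfl | hy
                · rfl
                · exact absurd hxy (hcon y hy)
              · rcases hy with rfl | hy
                · exact absurd hxy.symm (hcon x hx)
                · exact hinj x hx y hy hxy
            obtain ⟨i, hi, hphi⟩ := this
            exact ⟨i, hi, hpatt, hinj, hphi⟩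
          · rintro ⟨i, hi, hpatt, hinj, hphi⟩
            refine ⟨⟨hpatt, hinj⟩, ?_⟩
            rintro ⟨-, hinj1⟩
            have h1 : m' ∈ scope S (m + 1) := by
              rw [hscope_succ]; exact Finset.mem_insert_self _ _
            have h2 : i ∈ scope S (m + 1) := hscope_sub hi
            exact hine i hi (hinj1 i h2 m' h1 hphi.symm)
        have hdisj : ∀ i ∈ scope S m, ∀ j ∈ scope S m, i ≠ j → Disjoint (P i) (P j) := by
          intro i hi j hj hij
          rw [Finset.disjoint_left]
          intro φ hφi hφj
          simp only [hP, Finset.mem_filter, Finset.mem_univ, true_and] at hφi hφj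
          exact hij (hφi.2.1 i hi j hj (hφi.2.2.symm.trans hφj.2.2))
        have hcard1 : Am.card = Am1.card + ∑ i ∈ scope S m, (P i).card := by
          have h2 := Finset.card_sdiff_add_card_eq_card hsub
          rw [hsdiff, Finset.card_biUnion hdisj] at h2
          omega
        -- now count each P i
        have hPcard : ∀ i ∈ scope S m,
            n * (P i).card = (if (∀ y ∈ S, C m' y = C i y ∧ C y m' = C y i)
              then injCnt D C (S.erase m') m else 0) := by
          intro i hi
          by_cases hcons : ∀ y ∈ S, C m' y = C i y ∧ C y m' = C y i
          · rw [if_pos hcons]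
            -- bijection between Qset and P i ×ˢ univ
            set r : Fin n → Fin n := Function.update id m' i with hr
            have hrm' : r m' = i := by simp [hr]
            have hrx : ∀ x, x ≠ m' → r x = x := by
              intro x hx; simp [hr, Function.update_of_ne hx]
            set Qset : Finset (Fin n → Fin n) :=
              Finset.univ.filter (fun ρ =>
                patt D C (S.erase m') ρ ∧ injOn ρ (scope (S.erase m') m)) with hQ
            have hinj : injCnt D C (S.erase m') m = Qset.card := rfl
            have him' : i ≠ m' := hine i hi
            have hierase : i ∈ S.erase m' := Finset.mem_erase.mpr ⟨him', hiS i hi⟩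
            have hrS : ∀ z ∈ S, r z ∈ S.erase m' := by
              intro z hz
              by_cases hzm : z = m'
              · subst hzm; rw [hrm']; exact hierase
              · rw [hrx z hzm]; exact Finset.mem_erase.mpr ⟨hzm, hz⟩
            have hCr : ∀ x ∈ S, ∀ y ∈ S, C (r x) (r y) = C x y := by
              intro x hx y hy
              by_cases hxm : x = m' <;> by_cases hym : y = m'
              · rw [hxm, hym, hrm']
                have h1 := (hcons m' hm'S).1
                have h2 := (hcons i (hiS i hi)).2
                omega
              · rw [hxm, hrm', hrx y hym]
                exact ((hcons y hy).1).symm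
              · rw [hym, hrm', hrx x hxm]
                exact ((hcons x hx).2).symm
              · rw [hrx x hxm, hrx y hym]
            have hbij : Qset.card = ((P i) ×ˢ (Finset.univ : Finset (Fin n))).card := by
              apply Finset.card_bij'
                (i := fun ρ _ => (ρ ∘ r, ρ m'))
                (j := fun p _ => Function.update p.1 m' p.2)
              · -- maps into target
                intro ρ hρ
                rw [hQ, Finset.mem_filter] at hρ
                obtain ⟨-, hpatt, hinjρ⟩ := hρ
                rw [Finset.mem_product]
                refine ⟨?_, Finset.mem_univ _⟩
                rw [hP, Finset.mem_filter]
                refine ⟨Finset.mem_univ _, ?_, ?_, ?_⟩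
                · intro x hx y hy
                  show D (ρ (r x)) (ρ (r y)) = C x y
                  rw [hpatt (r x) (hrS x hx) (r y) (hrS y hy)]
                  exact hCr x hx y hy
                · intro x hx y hy hxy
                  have hxy' : ρ (r x) = ρ (r y) := hxy
                  rw [hrx x (hine x hx), hrx y (hine y hy)] at hxy'
                  rw [← hscope_erase] at hx hy
                  exact hinjρ x hx y hy hxy'
                · show ρ (r m') = ρ (r i)
                  rw [hrm', hrx i him']
              · -- reverse maps into source
                intro p hp
                rw [Finset.mem_product, hP, Finset.mem_filter] at hp
                obtain ⟨⟨-, hpatt, hinjφ, hphi⟩, -⟩ := hp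
                rw [hQ, Finset.mem_filter]
                refine ⟨Finset.mem_univ _, ?_, ?_⟩
                · intro x hx y hy
                  rcases Finset.mem_erase.mp hx with ⟨hxm, hxS⟩
                  rcases Finset.mem_erase.mp hy with ⟨hym, hyS⟩
                  rw [Function.update_of_ne hxm, Function.update_of_ne hym]
                  exact hpatt x hxS y hyS
                · intro x hx y hy hxy
                  rw [hscope_erase] at hx hy
                  rw [Function.update_of_ne (hine x hx), Function.update_of_ne (hine y hy)] at hxy
                  exact hinjφ x hx y hy hxy
              · -- left inverse
                intro ρ hρ
                funext x
                by_cases hxm : x = m'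
                · rw [hxm]
                  exact Function.update_self _ _ _
                · rw [Function.update_of_ne hxm]
                  show ρ (r x) = ρ x
                  rw [hrx x hxm]
              · -- right inverse
                intro p hp
                rw [Finset.mem_product, hP, Finset.mem_filter] at hp
                obtain ⟨⟨-, hpatt, hinjφ, hphi⟩, -⟩ := hp
                apply Prod.ext
                · funext x
                  by_cases hxm : x = m'
                  · show Function.update p.1 m' p.2 (r x) = p.1 x
                    rw [hxm, hrm', Function.update_of_ne him']
                    exact hphi.symm
                  · show Function.update p.1 m' p.2 (r x) = p.1 x
                    rw [hrx x hxm, Function.update_of_ne hxm]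
                · exact Function.update_self _ _ _
            rw [hinj, hbij, Finset.card_product, Finset.card_univ, Fintype.card_fin,
              Nat.mul_comm]
          · rw [if_neg hcons]
            have : P i = ∅ := by
              rw [Finset.eq_empty_iff_forall_notMem]
              intro φ hφ
              rw [hP, Finset.mem_filter] at hφ
              obtain ⟨-, hpatt, -, hphi⟩ := hφ
              apply hcons
              intro y hy
              constructor
              · rw [← hpatt m' hm'S y hy, ← hpatt i (hiS i hi) y hy, hphi]
              · rw [← hpatt y hy m' hm'S, ← hpatt y hy i (hiS i hi), hphi]
            rw [this]
            simp
        have : n * Am.card = n * Am1.card + ∑ i ∈ scope S m, n * (P i).card := by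
          rw [hcard1, Nat.mul_add, Finset.mul_sum]
        rw [Finset.sum_congr rfl hPcard] at this
        exact this
      have hAdjErase : AdjOn C (S.erase m') :=
        ⟨fun x hx y hy => hC.1 x (Finset.mem_of_mem_erase hx) y (Finset.mem_of_mem_erase hy),
         fun x hx => hC.2 x (Finset.mem_of_mem_erase hx)⟩
      have e1 := main B
      have e2 := main B'
      have e3 := ih C S hC
      have e4 := ih C (S.erase m') hAdjErase
      rw [e3, e4] at e1
      have : n * injCnt B C S (m + 1) = n * injCnt B' C S (m + 1) := by omega
      exact Nat.eq_of_mul_eq_mul_left hn this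
    · -- no element of S has value m : scopes coincide
      push_neg at hm
      have hscope_eq : scope S (m + 1) = scope S m := by
        ext x
        simp only [scope, Finset.mem_filter]
        constructor
        · rintro ⟨hxS, hlt⟩
          refine ⟨hxS, ?_⟩
          rcases Nat.lt_succ_iff_lt_or_eq.mp hlt with hlt | heq
          · exact hlt
          · exact absurd hxS (by have := hm x heq; exact this)
        · rintro ⟨hxS, hlt⟩; exact ⟨hxS, by omega⟩
      have e : ∀ D : Matrix (Fin n) (Fin n) ℕ, injCnt D C S (m + 1) = injCnt D C S m := by
        intro D
        unfold injCnt
        rw [hscope_eq]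
      rw [e B, e B']
      exact ih C S hC


end HDM

/-- If two multigraphs on `n` vertices have the same homomorphism densities
`t_≤(A,·)` for every `k` and every `A ∈ A_k`, then they are isomorphic. -/
theorem homDensity_determines_multigraph (n : ℕ) (hn : 0 < n)
    (B B' : Matrix (Fin n) (Fin n) ℕ) (hB : IsAdj B) (hB' : IsAdj B')
    (h : ∀ (k : ℕ) (A : Matrix (Fin k) (Fin k) ℕ), IsAdj A →
      homDensity A B = homDensity A B') :
    ∃ τ : Equiv.Perm (Fin n), ∀ i j, B' i j = B (τ i) (τ j) := by
  classical
  have hL3 : ∀ (C : Matrix (Fin n) (Fin n) ℕ) (S : Finset (Fin n)), HDM.AdjOn C S →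
      HDM.eqCnt B C S = HDM.eqCnt B' C S := fun C S hC => HDM.L3 hn B B' hB hB' h C S hC
  have hL4 := HDM.L4 hn B B' hL3
  have hAdjB' : HDM.AdjOn B' Finset.univ :=
    ⟨fun x _ y _ => hB'.1 x y, fun x _ => hB'.2 x⟩
  have e := hL4 n B' Finset.univ hAdjB'
  have pos : 0 < HDM.injCnt B' B' Finset.univ n := by
    rw [HDM.injCnt]
    apply Finset.card_pos.mpr
    refine ⟨id, Finset.mem_filter.mpr ⟨Finset.mem_univ _, ?_, ?_⟩⟩
    · intro x _ y _; rfl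
    · intro x _ y _ hxy; exact hxy
  rw [← e] at pos
  rw [HDM.injCnt] at pos
  obtain ⟨φ, hφ⟩ := Finset.card_pos.mp pos
  rw [Finset.mem_filter] at hφ
  obtain ⟨-, hpatt, hinj⟩ := hφ
  have hinj' : Function.Injective φ := by
    intro a b hab
    have ha : a ∈ HDM.scope Finset.univ n :=
      Finset.mem_filter.mpr ⟨Finset.mem_univ _, a.isLt⟩
    have hb : b ∈ HDM.scope Finset.univ n :=
      Finset.mem_filter.mpr ⟨Finset.mem_univ _, b.isLt⟩
    exact hinj a ha b hb hab
  have hbij : Function.Bijective φ := Finite.injective_iff_bijective.mp hinj'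
  refine ⟨Equiv.ofBijective φ hbij, ?_⟩
  intro i j
  exact (hpatt i (Finset.mem_univ _) j (Finset.mem_univ _)).symm
end

section
/- If a multigraph parameter f is normalized, multiplicative, non-defective, and reflection positive, then its Möbius transform is nonnegative: f†(A) ≥ 0 for every k ∈ ℕ and every A ∈ A_k. -/
open scoped Classical BigOperators
open Filter

/-- number of edges `e(A) = (1/2) ∑_{i,j} A i j`. -/
def numEdges {k : ℕ} (A : Matrix (Fin k) (Fin k) ℕ) : ℕ :=
  (∑ i, ∑ j, A i j) / 2

/-- `E ∈ E_k`: symmetric, off-diagonal entries in `{0,1}`, diagonal entries in `{0,2}`. -/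
def IsEdgeM {k : ℕ} (E : Matrix (Fin k) (Fin k) ℕ) : Prop :=
  (∀ i j, E i j = E j i) ∧ (∀ i j, i ≠ j → E i j ≤ 1) ∧ ∀ i, E i i = 0 ∨ E i i = 2

/-- The (finite) set `E_k` of edge matrices, realized as a `Finset`. -/
noncomputable def edgeFinset (k : ℕ) : Finset (Matrix (Fin k) (Fin k) ℕ) :=
  Finset.image (fun (E : Fin k → Fin k → Fin 3) => (Matrix.of fun i j => (E i j : ℕ)))
    (Finset.univ.filter fun E => IsEdgeM (Matrix.of fun i j => (E i j : ℕ)))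

/-- Möbius transform `f†(A) = ∑_{E ∈ E_k} (−1)^{e(E)} f(A+E)`. -/
noncomputable def mobius {k : ℕ} (f : Matrix (Fin k) (Fin k) ℕ → ℝ)
    (A : Matrix (Fin k) (Fin k) ℕ) : ℝ :=
  ∑ E ∈ edgeFinset k, (-1 : ℝ) ^ numEdges E * f (A + E)

/-- Block-diagonal matrix `diag(A₁, A₂)`: the disjoint union of two multigraphs. -/
def blockDiag {k₁ k₂ : ℕ} (A₁ : Matrix (Fin k₁) (Fin k₁) ℕ)
    (A₂ : Matrix (Fin k₂) (Fin k₂) ℕ) : Matrix (Fin (k₁ + k₂)) (Fin (k₁ + k₂)) ℕ :=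
  Matrix.submatrix (Matrix.fromBlocks A₁ 0 0 A₂) finSumFinEquiv.symm finSumFinEquiv.symm

/-- Extension of a matrix on `Fin m` to `ℕ × ℕ` by zero. -/
def matExt {m : ℕ} (A : Matrix (Fin m) (Fin m) ℕ) : ℕ → ℕ → ℕ := fun i j =>
  if h : i < m ∧ j < m then A ⟨i, h.1⟩ ⟨j, h.2⟩ else 0

/-- Reindexing used for gluing: a vertex of `F₁F₂` (first the `k` labeled vertices, then the
`n₁` unlabeled vertices of `F₁`, then the `n₂` unlabeled vertices of `F₂`), viewed as a
vertex of `F₂`; vertices of `F₁ ∖ [k]` are sent out of range. -/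
def glueIdx (k n₁ n₂ : ℕ) (i : ℕ) : ℕ :=
  if i < k then i else if k + n₁ ≤ i then i - n₁ else k + n₂

/-- Gluing `A₁ ∨ A₂` of two `k`-labeled multigraphs. -/
def glue (k n₁ n₂ : ℕ) (A₁ : Matrix (Fin (k + n₁)) (Fin (k + n₁)) ℕ)
    (A₂ : Matrix (Fin (k + n₂)) (Fin (k + n₂)) ℕ) :
    Matrix (Fin (k + n₁ + n₂)) (Fin (k + n₁ + n₂)) ℕ :=
  Matrix.of fun i j =>
    max (matExt A₁ i j) (matExt A₂ (glueIdx k (n₁) (n₂) i) (glueIdx k (n₁) (n₂) j))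

section Aux

variable {k : ℕ}

/-- The 0/1(/2) matrix attached to a set of positions (unordered pairs). -/
noncomputable def Emat (k : ℕ) (S : Finset (Sym2 (Fin k))) : Matrix (Fin k) (Fin k) ℕ :=
  Matrix.of fun i j => if s(i, j) ∈ S then (if i = j then 2 else 1) else 0

lemma Emat_apply (S : Finset (Sym2 (Fin k))) (i j : Fin k) :
    Emat k S i j = if s(i, j) ∈ S then (if i = j then 2 else 1) else 0 := rfl

lemma Emat_symm (S : Finset (Sym2 (Fin k))) (i j : Fin k) :
    Emat k S i j = Emat k S j i := by
  simp only [Emat_apply, Sym2.eq_swap (a := i) (b := j)]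
  congr 1
  simp [eq_comm]

lemma isEdgeM_Emat (S : Finset (Sym2 (Fin k))) : IsEdgeM (Emat k S) := by
  refine ⟨Emat_symm S, fun i j hij => ?_, fun i => ?_⟩
  · simp only [Emat_apply, if_neg hij]
    split <;> omega
  · simp only [Emat_apply, if_pos rfl]
    split
    · right; rfl
    · left; rfl

lemma Emat_inj : Function.Injective (Emat k) := by
  intro S T h
  ext z
  induction z using Sym2.ind with
  | _ i j =>
    have := congrFun (congrFun h i) j
    simp only [Emat_apply] at this
    by_cases hS : s(i, j) ∈ S <;> by_cases hT : s(i, j) ∈ T <;>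
      simp [hS, hT] at this ⊢ <;> split at this <;> omega

lemma mem_edgeFinset_iff (M : Matrix (Fin k) (Fin k) ℕ) :
    M ∈ edgeFinset k ↔ IsEdgeM M := by
  constructor
  · intro hM
    obtain ⟨E, hE, rfl⟩ := Finset.mem_image.1 hM
    exact (Finset.mem_filter.1 hE).2
  · intro hM
    have hlt : ∀ i j, M i j < 3 := by
      intro i j
      by_cases hij : i = j
      · subst hij; rcases hM.2.2 i with h | h <;> omega
      · have := hM.2.1 i j hij; omega
    refine Finset.mem_image.2 ⟨fun i j => (⟨M i j, hlt i j⟩ : Fin 3), ?_, ?_⟩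
    · refine Finset.mem_filter.2 ⟨Finset.mem_univ _, ?_⟩
      have : (Matrix.of fun i j => ((⟨M i j, hlt i j⟩ : Fin 3) : ℕ)) = M := by
        ext i j; rfl
      rw [this]; exact hM
    · ext i j; rfl

lemma edgeFinset_eq_image :
    edgeFinset k = Finset.image (Emat k) Finset.univ := by
  ext M
  rw [mem_edgeFinset_iff]
  constructor
  · intro hM
    refine Finset.mem_image.2 ⟨Finset.univ.filter fun z =>
      Sym2.lift ⟨fun i j => M i j, fun i j => hM.1 i j⟩ z ≠ 0, Finset.mem_univ _, ?_⟩
    ext i j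
    simp only [Emat_apply, Finset.mem_filter, Finset.mem_univ, true_and, Sym2.lift_mk]
    by_cases hij : i = j
    · subst hij
      rcases hM.2.2 i with h | h <;> simp [h]
    · have h1 := hM.2.1 i j hij
      rcases Nat.le_one_iff_eq_zero_or_eq_one.1 h1 with h | h <;> simp [h, hij]
  · rintro hM
    obtain ⟨S, _, rfl⟩ := Finset.mem_image.1 hM
    exact isEdgeM_Emat S

end Aux
section Aux2

variable {k : ℕ}

lemma fiber_pairs_eq (a b : Fin k) :
    ((Finset.univ ×ˢ Finset.univ).filter
        (fun p : Fin k × Fin k => s(p.1, p.2) = s(a, b))) =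
      if a = b then {(a, a)} else {(a, b), (b, a)} := by
  split
  · next h =>
    subst h
    ext p
    simp only [Finset.mem_filter, Finset.mem_product, Finset.mem_univ, true_and,
      Sym2.eq_iff, Finset.mem_singleton, Prod.ext_iff]
    tauto
  · next h =>
    ext p
    simp only [Finset.mem_filter, Finset.mem_product, Finset.mem_univ, true_and,
      Sym2.eq_iff, Finset.mem_insert, Finset.mem_singleton, Prod.ext_iff]

lemma fiber_diag_eq (a b : Fin k) :
    (Finset.univ.filter (fun i : Fin k => s(i, i) = s(a, b))) =
      if a = b then {a} else ∅ := by
  split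
  · next h =>
    subst h
    ext i
    simp only [Finset.mem_filter, Finset.mem_univ, true_and, Sym2.eq_iff,
      Finset.mem_singleton]
    tauto
  · next h =>
    ext i
    simp only [Finset.mem_filter, Finset.mem_univ, true_and, Sym2.eq_iff,
      Finset.notMem_empty, iff_false]
    rintro (⟨h1, h2⟩ | ⟨h1, h2⟩) <;> exact h (h1 ▸ h2 ▸ rfl)

lemma sum_Emat (S : Finset (Sym2 (Fin k))) :
    ∑ i, ∑ j, Emat k S i j = 2 * S.card := by
  have hsplit : ∀ i j : Fin k, Emat k S i j =
      (if s(i, j) ∈ S then 1 else 0) + (if s(i, i) ∈ S ∧ i = j then 1 else 0) := by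
    intro i j
    rw [Emat_apply]
    by_cases hij : i = j
    · subst hij; by_cases h : s(i, i) ∈ S <;> simp [h]
    · by_cases h : s(i, j) ∈ S <;> simp [h, hij]
  simp only [hsplit, Finset.sum_add_distrib]
  have h1 : (∑ i : Fin k, ∑ j : Fin k, if s(i, j) ∈ S then (1 : ℕ) else 0) =
      ((Finset.univ ×ˢ Finset.univ).filter
        (fun p : Fin k × Fin k => s(p.1, p.2) ∈ S)).card := by
    rw [Finset.card_filter, Finset.sum_product]
  have h2 : (∑ i : Fin k, ∑ j : Fin k, if s(i, i) ∈ S ∧ i = j then (1 : ℕ) else 0) =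
      (Finset.univ.filter (fun i : Fin k => s(i, i) ∈ S)).card := by
    rw [Finset.card_filter]
    refine Finset.sum_congr rfl fun i _ => ?_
    by_cases h : s(i, i) ∈ S <;> simp [h]
  rw [h1, h2]
  rw [Finset.card_eq_sum_card_fiberwise
      (f := fun p : Fin k × Fin k => s(p.1, p.2)) (t := S)
      (s := (Finset.univ ×ˢ Finset.univ).filter (fun p : Fin k × Fin k => s(p.1, p.2) ∈ S))
      (fun p hp => (Finset.mem_filter.1 hp).2),
    Finset.card_eq_sum_card_fiberwise
      (f := fun i : Fin k => s(i, i)) (t := S)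
      (s := Finset.univ.filter (fun i : Fin k => s(i, i) ∈ S))
      (fun i hi => (Finset.mem_filter.1 hi).2),
    ← Finset.sum_add_distrib, Finset.card_eq_sum_ones S, Finset.mul_sum]
  refine Finset.sum_congr rfl fun z hz => ?_
  induction z using Sym2.ind with
  | _ a b =>
    have e1 : ((Finset.univ ×ˢ Finset.univ).filter
        (fun p : Fin k × Fin k => s(p.1, p.2) ∈ S)).filter
          (fun p => s(p.1, p.2) = s(a, b)) =
        (Finset.univ ×ˢ Finset.univ).filter
          (fun p : Fin k × Fin k => s(p.1, p.2) = s(a, b)) := by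
      rw [Finset.filter_filter]
      refine Finset.filter_congr fun p _ => ?_
      constructor
      · exact fun h => h.2
      · exact fun h => ⟨h ▸ hz, h⟩
    have e2 : (Finset.univ.filter (fun i : Fin k => s(i, i) ∈ S)).filter
          (fun i => s(i, i) = s(a, b)) =
        Finset.univ.filter (fun i : Fin k => s(i, i) = s(a, b)) := by
      rw [Finset.filter_filter]
      refine Finset.filter_congr fun i _ => ?_
      constructor
      · exact fun h => h.2
      · exact fun h => ⟨h ▸ hz, h⟩
    rw [e1, e2, fiber_pairs_eq, fiber_diag_eq]
    by_cases hab : a = b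
    · simp [hab]
    · have : ((a, b) : Fin k × Fin k) ≠ (b, a) := by
        simp [Prod.ext_iff]; tauto
      simp [hab, Finset.card_insert_of_notMem, this]

lemma numEdges_Emat (S : Finset (Sym2 (Fin k))) :
    numEdges (Emat k S) = S.card := by
  rw [numEdges, sum_Emat]
  omega

end Aux2
section Aux3

variable {k : ℕ}

lemma Emat_union (S T : Finset (Sym2 (Fin k))) (i j : Fin k) :
    max (Emat k S i j) (Emat k T i j) = Emat k (S ∪ T) i j := by
  simp only [Emat_apply, Finset.mem_union]
  by_cases hS : s(i, j) ∈ S <;> by_cases hT : s(i, j) ∈ T <;> simp [hS, hT]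

lemma add_Emat_max (A : Matrix (Fin k) (Fin k) ℕ) (S T : Finset (Sym2 (Fin k)))
    (i j : Fin k) :
    max ((A + Emat k S) i j) ((A + Emat k T) i j) = (A + Emat k (S ∪ T)) i j := by
  simp only [Matrix.add_apply]
  rw [max_add_add_left, Emat_union]

lemma isAdj_add_Emat {A : Matrix (Fin k) (Fin k) ℕ} (hA : IsAdj A)
    (S : Finset (Sym2 (Fin k))) : IsAdj (A + Emat k S) := by
  refine ⟨fun i j => ?_, fun i => ?_⟩
  · simp only [Matrix.add_apply, hA.1 i j, Emat_symm S i j]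
  · simp only [Matrix.add_apply]
    refine (hA.2 i).add ?_
    rw [Emat_apply, if_pos rfl]
    split
    · exact even_two
    · exact Even.zero

lemma sum_powerset_neg_one_real {X : Type*} [DecidableEq X] (B : Finset X) :
    (∑ D ∈ B.powerset, (-1 : ℝ) ^ D.card) = if B = ∅ then 1 else 0 := by
  have h := Finset.sum_powerset_neg_one_pow_card (x := B)
  have h2 : ((∑ m ∈ B.powerset, (-1 : ℤ) ^ m.card : ℤ) : ℝ)
      = ∑ D ∈ B.powerset, (-1 : ℝ) ^ D.card := by push_cast; rfl
  rw [← h2, h]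
  split <;> norm_num

/-- Key combinatorial identity: expanding a signed sum over unions. -/
lemma union_expand {X : Type*} [Fintype X] [DecidableEq X] (g : Finset X → ℝ) :
    ∑ B : Finset X, ∑ C : Finset X,
      ((-1 : ℝ) ^ B.card * (-1 : ℝ) ^ C.card) * g (B ∪ C)
    = ∑ U : Finset X, (-1 : ℝ) ^ U.card * g U := by
  have inner : ∀ B : Finset X,
      (∑ C : Finset X, ((-1 : ℝ) ^ B.card * (-1 : ℝ) ^ C.card) * g (B ∪ C))
      = (∑ D ∈ B.powerset, (-1 : ℝ) ^ D.card) *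
          (∑ E ∈ Bᶜ.powerset, ((-1 : ℝ) ^ B.card * (-1 : ℝ) ^ E.card) * g (B ∪ E)) := by
    intro B
    have hbij : (∑ C : Finset X, ((-1 : ℝ) ^ B.card * (-1 : ℝ) ^ C.card) * g (B ∪ C))
        = ∑ p ∈ B.powerset ×ˢ Bᶜ.powerset,
            ((-1 : ℝ) ^ p.1.card) *
              (((-1 : ℝ) ^ B.card * (-1 : ℝ) ^ p.2.card) * g (B ∪ p.2)) := by
      refine Finset.sum_bij' (fun C _ => (C ∩ B, C \ B)) (fun p _ => p.1 ∪ p.2)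
        (fun C _ => ?_) (fun p _ => Finset.mem_univ _) (fun C _ => ?_) (fun p hp => ?_)
        (fun C _ => ?_)
      · refine Finset.mem_product.2 ⟨Finset.mem_powerset.2 Finset.inter_subset_right,
          Finset.mem_powerset.2 fun x hx => Finset.mem_compl.2 (Finset.mem_sdiff.1 hx).2⟩
      · show C ∩ B ∪ C \ B = C
        rw [Finset.union_comm]
        exact Finset.sdiff_union_inter C B
      · obtain ⟨h1, h2⟩ := Finset.mem_product.1 hp
        rw [Finset.mem_powerset] at h1 h2
        have hd : Disjoint p.2 B := by
          rw [Finset.disjoint_left]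
          intro a ha hb
          exact (Finset.mem_compl.1 (h2 ha)) hb
        have e1 : (p.1 ∪ p.2) ∩ B = p.1 := by
          rw [Finset.union_inter_distrib_right, Finset.inter_eq_left.2 h1,
            Finset.disjoint_iff_inter_eq_empty.1 hd, Finset.union_empty]
        have e2 : (p.1 ∪ p.2) \ B = p.2 := by
          rw [Finset.union_sdiff_distrib, Finset.sdiff_eq_empty_iff_subset.2 h1,
            Finset.empty_union, Finset.sdiff_eq_self_iff_disjoint.2 hd]
        show ((p.1 ∪ p.2) ∩ B, (p.1 ∪ p.2) \ B) = p
        rw [e1, e2]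
      · have hcard : (C ∩ B).card + (C \ B).card = C.card :=
          Finset.card_inter_add_card_sdiff C B
        have hunion : B ∪ C \ B = B ∪ C := Finset.union_sdiff_self_eq_union
        rw [hunion, ← hcard, pow_add]
        ring
    rw [hbij, Finset.sum_product, Finset.sum_mul_sum]
  calc ∑ B : Finset X, ∑ C : Finset X,
        ((-1 : ℝ) ^ B.card * (-1 : ℝ) ^ C.card) * g (B ∪ C)
      = ∑ B : Finset X, (∑ D ∈ B.powerset, (-1 : ℝ) ^ D.card) *
          (∑ E ∈ Bᶜ.powerset, ((-1 : ℝ) ^ B.card * (-1 : ℝ) ^ E.card) * g (B ∪ E)) := by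
        exact Finset.sum_congr rfl fun B _ => inner B
    _ = ∑ E ∈ (∅ : Finset X)ᶜ.powerset,
          ((-1 : ℝ) ^ (∅ : Finset X).card * (-1 : ℝ) ^ E.card) * g (∅ ∪ E) := by
        rw [Finset.sum_eq_single (∅ : Finset X)]
        · rw [sum_powerset_neg_one_real, if_pos rfl, one_mul]
        · intro B _ hB
          rw [sum_powerset_neg_one_real, if_neg hB, zero_mul]
        · intro h
          exact absurd (Finset.mem_univ _) h
    _ = ∑ U : Finset X, (-1 : ℝ) ^ U.card * g U := by
        rw [Finset.compl_empty, Finset.powerset_univ]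
        refine Finset.sum_congr rfl fun U _ => ?_
        simp

end Aux3
section GlueLemma

variable {k : ℕ}

lemma glue_apply_zero (A₁ A₂ : Matrix (Fin k) (Fin k) ℕ) (i j : Fin (k + 0 + 0)) :
    glue k 0 0 A₁ A₂ i j = max (A₁ i j) (A₂ i j) := by
  have hi : (i : ℕ) < k := i.isLt
  have hj : (j : ℕ) < k := j.isLt
  show max (matExt A₁ i j) (matExt A₂ (glueIdx k 0 0 i) (glueIdx k 0 0 j)) = _
  rw [glueIdx, glueIdx, if_pos hi, if_pos hj]
  simp only [matExt]
  rw [dif_pos ⟨hi, hj⟩, dif_pos ⟨hi, hj⟩]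
  rfl

end GlueLemma

/-- A normalized, multiplicative, non-defective and reflection positive multigraph
parameter has nonnegative Möbius transform. -/
theorem mobius_nonneg_of_reflectionPositive
    (f : ∀ k : ℕ, Matrix (Fin k) (Fin k) ℕ → ℝ)
    -- `f` is a multigraph parameter: invariance under relabeling
    (hinv : ∀ (k : ℕ) (σ : Equiv.Perm (Fin k)) (A : Matrix (Fin k) (Fin k) ℕ), IsAdj A →
      f k (Matrix.of fun i j => A (σ i) (σ j)) = f k A)
    -- normalized
    (hnorm : f 1 0 = 1)
    -- multiplicative
    (hmult : ∀ (k₁ k₂ : ℕ) (A₁ : Matrix (Fin k₁) (Fin k₁) ℕ) (A₂ : Matrix (Fin k₂) (Fin k₂) ℕ),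
      IsAdj A₁ → IsAdj A₂ → f (k₁ + k₂) (blockDiag A₁ A₂) = f k₁ A₁ * f k₂ A₂)
    -- non-defective
    (hnd : ∀ (k : ℕ) (A : ℕ → Matrix (Fin k) (Fin k) ℕ), (∀ m, IsAdj (A m)) →
      Tendsto (fun m => numEdges (A m)) atTop atTop →
      Tendsto (fun m => f k (A m)) atTop (nhds 0))
    -- reflection positive
    (hrp : ∀ (k N : ℕ) (nl : Fin N → ℕ)
      (F : ∀ l : Fin N, Matrix (Fin (k + nl l)) (Fin (k + nl l)) ℕ),
      (∀ l, IsAdj (F l)) →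
      (Matrix.of fun l m : Fin N =>
        f (k + nl l + nl m) (glue k (nl l) (nl m) (F l) (F m))).PosSemidef)
    (k : ℕ) (A : Matrix (Fin k) (Fin k) ℕ) (hA : IsAdj A) :
    0 ≤ mobius (f k) A := by
  classical
  have hmob : mobius (f k) A
      = ∑ U : Finset (Sym2 (Fin k)), (-1 : ℝ) ^ U.card * f k (A + Emat k U) := by
    rw [mobius, edgeFinset_eq_image, Finset.sum_image (fun S _ T _ h => Emat_inj h)]
    refine Finset.sum_congr rfl fun S _ => ?_
    rw [numEdges_Emat]
  have key := union_expand (X := Sym2 (Fin k)) (fun S => f k (A + Emat k S))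
  rw [hmob, ← key]
  set n := Fintype.card (Finset (Sym2 (Fin k))) with hn
  let e : Fin n ≃ Finset (Sym2 (Fin k)) := (Fintype.equivFin (Finset (Sym2 (Fin k)))).symm
  have hpsd := hrp k n (fun _ => 0) (fun l => A + Emat k (e l))
    (fun l => isAdj_add_Emat hA (e l))
  have hq := hpsd.dotProduct_mulVec_nonneg (fun l => (-1 : ℝ) ^ (e l).card)
  have hMentry : ∀ l m : Fin n,
      f (k + 0 + 0) (glue k 0 0 (A + Emat k (e l)) (A + Emat k (e m)))
        = f k (A + Emat k (e l ∪ e m)) := by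
    intro l m
    have hg : glue k 0 0 (A + Emat k (e l)) (A + Emat k (e m))
        = A + Emat k (e l ∪ e m) := by
      ext i j
      rw [glue_apply_zero, add_Emat_max]
    exact congrArg (f k) hg
  have hq2 : (0 : ℝ) ≤ ∑ l : Fin n, ∑ m : Fin n,
      (-1 : ℝ) ^ (e l).card * (f k (A + Emat k (e l ∪ e m)) * (-1 : ℝ) ^ (e m).card) := by
    simp only [dotProduct, Matrix.mulVec, Pi.star_apply, star_trivial,
      Matrix.of_apply, Finset.mul_sum] at hq
    simp only [hMentry] at hq
    exact hq
  refine le_trans hq2 (le_of_eq ?_)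
  calc ∑ l : Fin n, ∑ m : Fin n,
        (-1 : ℝ) ^ (e l).card * (f k (A + Emat k (e l ∪ e m)) * (-1 : ℝ) ^ (e m).card)
      = ∑ l : Fin n, ∑ C : Finset (Sym2 (Fin k)),
        (-1 : ℝ) ^ (e l).card * (f k (A + Emat k (e l ∪ C)) * (-1 : ℝ) ^ C.card) := by
        refine Finset.sum_congr rfl fun l _ => ?_
        exact Equiv.sum_comp e (fun C => (-1 : ℝ) ^ (e l).card *
          (f k (A + Emat k (e l ∪ C)) * (-1 : ℝ) ^ C.card))
    _ = ∑ B : Finset (Sym2 (Fin k)), ∑ C : Finset (Sym2 (Fin k)),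
        (-1 : ℝ) ^ B.card * (f k (A + Emat k (B ∪ C)) * (-1 : ℝ) ^ C.card) := by
        exact Equiv.sum_comp e (fun B => ∑ C : Finset (Sym2 (Fin k)),
          (-1 : ℝ) ^ B.card * (f k (A + Emat k (B ∪ C)) * (-1 : ℝ) ^ C.card))
    _ = ∑ B : Finset (Sym2 (Fin k)), ∑ C : Finset (Sym2 (Fin k)),
        ((-1 : ℝ) ^ B.card * (-1 : ℝ) ^ C.card) * f k (A + Emat k (B ∪ C)) := by
        refine Finset.sum_congr rfl fun B _ => Finset.sum_congr rfl fun C _ => ?_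
        ring
end

section
/- Every convergent sequence (W_n)_{n=1}^∞ of multigraphons is tight, i.e. lim_{m→∞} sup_n ∫₀¹∫₀¹ ∑_{k=m}^∞ W_n(x,y,k) dx dy = 0 and lim_{m→∞} sup_n ∫₀¹ ∑_{k=m}^∞ W_n(x,x,k) dx = 0. -/
open scoped Classical BigOperators
open Filter MeasureTheory

/-- A multigraphon: a measurable `W : [0,1]×[0,1]×ℕ₀ → [0,1]` which is symmetric,
whose values at each point of `[0,1]²` sum to `1` over `ℕ₀`, and which vanishes on the
diagonal for odd multiplicities. -/
structure Multigraphon where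
  W : ℝ → ℝ → ℕ → ℝ
  measurable : ∀ m : ℕ, Measurable fun p : ℝ × ℝ => W p.1 p.2 m
  nonneg : ∀ x y m, 0 ≤ W x y m
  le_one : ∀ x y m, W x y m ≤ 1
  symm : ∀ x y m, W x y m = W y x m
  sum_one : ∀ x ∈ Set.Icc (0:ℝ) 1, ∀ y ∈ Set.Icc (0:ℝ) 1, ∑' m : ℕ, W x y m = 1
  diag_odd : ∀ x ∈ Set.Icc (0:ℝ) 1, ∀ m : ℕ, W x x (2 * m + 1) = 0

/-- `t_≤(A,W) = ∫_{[0,1]^k} ∏_{1≤i≤j≤k} (∑_{l=A(i,j)}^∞ W(x_i,x_j,l)) dx₁⋯dx_k`. -/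
noncomputable def tleW {k : ℕ} (A : Matrix (Fin k) (Fin k) ℕ) (G : Multigraphon) : ℝ :=
  ∫ x : Fin k → ℝ in Set.univ.pi fun _ => Set.Icc (0:ℝ) 1,
    ∏ p ∈ Finset.univ.filter (fun p : Fin k × Fin k => p.1 ≤ p.2),
      ∑' l : ℕ, G.W (x p.1) (x p.2) (A p.1 p.2 + l)


noncomputable def mgTail (G : Multigraphon) (m : ℕ) (x y : ℝ) : ℝ := ∑' l : ℕ, G.W x y (m + l)

lemma mg_summable (G : Multigraphon) {x y : ℝ} (hx : x ∈ Set.Icc (0:ℝ) 1)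
    (hy : y ∈ Set.Icc (0:ℝ) 1) : Summable (G.W x y) := by
  by_contra h
  have h0 := tsum_eq_zero_of_not_summable h
  rw [G.sum_one x hx y hy] at h0
  norm_num at h0

lemma mgTail_eq (G : Multigraphon) (m : ℕ) {x y : ℝ} (hx : x ∈ Set.Icc (0:ℝ) 1)
    (hy : y ∈ Set.Icc (0:ℝ) 1) :
    mgTail G m x y = 1 - ∑ j ∈ Finset.range m, G.W x y j := by
  have hs := mg_summable G hx hy
  have h := hs.sum_add_tsum_nat_add m
  rw [G.sum_one x hx y hy] at h
  have h2 : mgTail G m x y = ∑' l, G.W x y (l + m) :=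
    tsum_congr fun l => by rw [add_comm]
  rw [h2]; linarith

lemma mgTail_nonneg (G : Multigraphon) (m : ℕ) (x y : ℝ) : 0 ≤ mgTail G m x y :=
  tsum_nonneg fun l => G.nonneg x y _

lemma mgTail_le_one (G : Multigraphon) (m : ℕ) {x y : ℝ} (hx : x ∈ Set.Icc (0:ℝ) 1)
    (hy : y ∈ Set.Icc (0:ℝ) 1) : mgTail G m x y ≤ 1 := by
  rw [mgTail_eq G m hx hy]
  have : (0:ℝ) ≤ ∑ j ∈ Finset.range m, G.W x y j :=
    Finset.sum_nonneg fun j _ => G.nonneg x y j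
  linarith

lemma mgTail_anti (G : Multigraphon) {m m' : ℕ} (h : m ≤ m') {x y : ℝ}
    (hx : x ∈ Set.Icc (0:ℝ) 1) (hy : y ∈ Set.Icc (0:ℝ) 1) :
    mgTail G m' x y ≤ mgTail G m x y := by
  rw [mgTail_eq G m hx hy, mgTail_eq G m' hx hy]
  have : ∑ j ∈ Finset.range m, G.W x y j ≤ ∑ j ∈ Finset.range m', G.W x y j :=
    Finset.sum_le_sum_of_subset_of_nonneg (Finset.range_subset_range.2 h)
      (fun j _ _ => G.nonneg x y j)
  linarith

lemma mgTail_tendsto (G : Multigraphon) {x y : ℝ} (hx : x ∈ Set.Icc (0:ℝ) 1)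
    (hy : y ∈ Set.Icc (0:ℝ) 1) :
    Tendsto (fun m => mgTail G m x y) atTop (nhds 0) := by
  have h2 : (fun m => mgTail G m x y) = fun m => ∑' l, G.W x y (l + m) :=
    funext fun m => tsum_congr fun l => by rw [add_comm]
  rw [h2]
  exact tendsto_sum_nat_add _

lemma main_sup (g : ℕ → ℕ → ℝ) (hnn : ∀ n m, 0 ≤ g n m)
    (hmono : ∀ n, Antitone (g n))
    (hvan : ∀ n, Tendsto (fun m => g n m) atTop (nhds 0))
    (hunif : ∀ ε : ℝ, 0 < ε → ∃ m₀ N : ℕ, ∀ n, N ≤ n → g n m₀ ≤ ε) :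
    Tendsto (fun m => ⨆ n, g n m) atTop (nhds 0) := by
  rw [Metric.tendsto_atTop]
  intro ε hε
  obtain ⟨m₀, N, hN⟩ := hunif (ε/2) (by linarith)
  have hMex : ∀ n : ℕ, ∃ M, ∀ m, M ≤ m → g n m ≤ ε/2 := by
    intro n
    obtain ⟨M, hM⟩ := (Metric.tendsto_atTop.1 (hvan n)) (ε/2) (by linarith)
    refine ⟨M, fun m hm => ?_⟩
    have := hM m hm
    rw [Real.dist_eq, sub_zero] at this
    exact le_of_lt (lt_of_abs_lt this)
  choose M hM using hMex
  refine ⟨max m₀ ((Finset.range N).sup M), fun m hm => ?_⟩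
  have hb : ∀ n, g n m ≤ ε/2 := by
    intro n
    rcases lt_or_ge n N with h | h
    · exact hM n m (le_trans (le_trans (Finset.le_sup (Finset.mem_range.2 h))
        (le_max_right _ _)) hm)
    · exact le_trans (hmono n (le_trans (le_max_left _ _) hm)) (hN n h)
  have hbdd : BddAbove (Set.range fun n => g n m) := ⟨ε/2, by rintro x ⟨n, rfl⟩; exact hb n⟩
  have h1 : (⨆ n, g n m) ≤ ε/2 := ciSup_le hb
  have h2 : 0 ≤ ⨆ n, g n m := le_trans (hnn 0 m) (le_ciSup hbdd 0)
  rw [Real.dist_eq, sub_zero, abs_of_nonneg h2]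
  linarith

def mgSq : Set (ℝ × ℝ) := (Set.Icc (0:ℝ) 1) ×ˢ (Set.Icc (0:ℝ) 1)

lemma mgSq_meas : MeasurableSet mgSq := measurableSet_Icc.prod measurableSet_Icc

lemma mgSq_lt_top : volume mgSq < ⊤ := (isCompact_Icc.prod isCompact_Icc).measure_lt_top

lemma mg_meas2 (G : Multigraphon) (m : ℕ) :
    Measurable (fun z : ℝ × ℝ => 1 - ∑ j ∈ Finset.range m, G.W z.1 z.2 j) :=
  measurable_const.sub (Finset.measurable_sum _ fun j _ => G.measurable j)

lemma mg_integrableOn2 (G : Multigraphon) (m : ℕ) :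
    IntegrableOn (fun z : ℝ × ℝ => mgTail G m z.1 z.2) mgSq volume := by
  constructor
  · refine (mg_meas2 G m).aestronglyMeasurable.restrict.congr ?_
    filter_upwards [ae_restrict_mem mgSq_meas] with z hz
    exact (mgTail_eq G m hz.1 hz.2).symm
  · refine HasFiniteIntegral.restrict_of_bounded (C := 1) mgSq_lt_top ?_
    filter_upwards [ae_restrict_mem mgSq_meas] with z hz
    rw [Real.norm_eq_abs, abs_of_nonneg (mgTail_nonneg G m z.1 z.2)]
    exact mgTail_le_one G m hz.1 hz.2

noncomputable def mgE2 (G : Multigraphon) (m : ℕ) : ℝ := ∫ z in mgSq, mgTail G m z.1 z.2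

lemma mgE2_eq_iterated (G : Multigraphon) (m : ℕ) :
    (∫ x in Set.Icc (0:ℝ) 1, ∫ y in Set.Icc (0:ℝ) 1, mgTail G m x y) = mgE2 G m := by
  have h := setIntegral_prod (μ := (volume : Measure ℝ)) (ν := (volume : Measure ℝ))
    (fun z : ℝ × ℝ => mgTail G m z.1 z.2)
    (s := Set.Icc (0:ℝ) 1) (t := Set.Icc (0:ℝ) 1)
    (by rw [← Measure.volume_eq_prod ℝ ℝ]; exact mg_integrableOn2 G m)
  rw [mgE2, mgSq, Measure.volume_eq_prod ℝ ℝ]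
  exact h.symm

lemma mgE2_nonneg (G : Multigraphon) (m : ℕ) : 0 ≤ mgE2 G m :=
  setIntegral_nonneg mgSq_meas fun z _ => mgTail_nonneg G m z.1 z.2

lemma mgE2_anti (G : Multigraphon) : Antitone (mgE2 G) := by
  intro m m' h
  exact setIntegral_mono_on (mg_integrableOn2 G m') (mg_integrableOn2 G m) mgSq_meas
    fun z hz => mgTail_anti G h hz.1 hz.2

lemma mgE2_tendsto (G : Multigraphon) : Tendsto (mgE2 G) atTop (nhds 0) := by
  have h := tendsto_integral_of_dominated_convergence (μ := volume.restrict mgSq)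
    (F := fun m (z : ℝ × ℝ) => mgTail G m z.1 z.2) (f := fun _ => (0:ℝ))
    (bound := fun _ => (1:ℝ))
    (fun m => (mg_integrableOn2 G m).1)
    (integrableOn_const mgSq_lt_top.ne)
    (fun m => by
      filter_upwards [ae_restrict_mem mgSq_meas] with z hz
      rw [Real.norm_eq_abs, abs_of_nonneg (mgTail_nonneg G m z.1 z.2)]
      exact mgTail_le_one G m hz.1 hz.2)
    (by
      filter_upwards [ae_restrict_mem mgSq_meas] with z hz
      exact mgTail_tendsto G hz.1 hz.2)
  simpa [show mgE2 G = fun n => ∫ z in mgSq, mgTail G n z.1 z.2 from rfl] using h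

lemma mgIcc_lt_top : volume (Set.Icc (0:ℝ) 1) < ⊤ := isCompact_Icc.measure_lt_top

lemma mg_meas1 (G : Multigraphon) (m : ℕ) :
    Measurable (fun x : ℝ => 1 - ∑ j ∈ Finset.range m, G.W x x j) :=
  measurable_const.sub (Finset.measurable_sum _ fun j _ =>
    (G.measurable j).comp (measurable_id.prodMk measurable_id))

lemma mg_integrableOn1 (G : Multigraphon) (m : ℕ) :
    IntegrableOn (fun x : ℝ => mgTail G m x x) (Set.Icc (0:ℝ) 1) volume := by
  constructor
  · refine (mg_meas1 G m).aestronglyMeasurable.restrict.congr ?_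
    filter_upwards [ae_restrict_mem measurableSet_Icc] with x hx
    exact (mgTail_eq G m hx hx).symm
  · refine HasFiniteIntegral.restrict_of_bounded (C := 1) mgIcc_lt_top ?_
    filter_upwards [ae_restrict_mem measurableSet_Icc] with x hx
    rw [Real.norm_eq_abs, abs_of_nonneg (mgTail_nonneg G m x x)]
    exact mgTail_le_one G m hx hx

noncomputable def mgD (G : Multigraphon) (m : ℕ) : ℝ :=
  ∫ x in Set.Icc (0:ℝ) 1, mgTail G m x x

lemma mgD_nonneg (G : Multigraphon) (m : ℕ) : 0 ≤ mgD G m :=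
  setIntegral_nonneg measurableSet_Icc fun x _ => mgTail_nonneg G m x x

lemma mgD_anti (G : Multigraphon) : Antitone (mgD G) := by
  intro m m' h
  exact setIntegral_mono_on (mg_integrableOn1 G m') (mg_integrableOn1 G m) measurableSet_Icc
    fun x hx => mgTail_anti G h hx hx

lemma mgD_tendsto (G : Multigraphon) : Tendsto (mgD G) atTop (nhds 0) := by
  have h := tendsto_integral_of_dominated_convergence
    (μ := volume.restrict (Set.Icc (0:ℝ) 1))
    (F := fun m (x : ℝ) => mgTail G m x x) (f := fun _ => (0:ℝ))
    (bound := fun _ => (1:ℝ))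
    (fun m => (mg_integrableOn1 G m).1)
    (integrableOn_const mgIcc_lt_top.ne)
    (fun m => by
      filter_upwards [ae_restrict_mem measurableSet_Icc] with x hx
      rw [Real.norm_eq_abs, abs_of_nonneg (mgTail_nonneg G m x x)]
      exact mgTail_le_one G m hx hx)
    (by
      filter_upwards [ae_restrict_mem measurableSet_Icc] with x hx
      exact mgTail_tendsto G hx hx)
  simpa [show mgD G = fun n => ∫ x in Set.Icc (0:ℝ) 1, mgTail G n x x from rfl] using h

def mgB (m : ℕ) : Matrix (Fin 2) (Fin 2) ℕ := fun i j => if i = j then 0 else m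
def mgC (m : ℕ) : Matrix (Fin 1) (Fin 1) ℕ := fun _ _ => 2 * m

lemma mgB_adj (m : ℕ) : IsAdj (mgB m) := by
  constructor
  · intro i j
    simp only [mgB]
    by_cases h : i = j <;> simp [h, eq_comm]
  · intro i; simp [mgB]

lemma mgC_adj (m : ℕ) : IsAdj (mgC m) := ⟨fun _ _ => rfl, fun _ => ⟨m, by simp [mgC, two_mul]⟩⟩

lemma mgB_edges (m : ℕ) : numEdges (mgB m) = m := by
  have h0 : (0 : Fin 2) ≠ 1 := by decide
  simp [numEdges, Fin.sum_univ_two, mgB, h0, h0.symm]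
  omega

lemma mgC_edges (m : ℕ) : numEdges (mgC m) = m := by
  simp [numEdges, mgC, Fin.sum_univ_one]

lemma tle_B (G : Multigraphon) (m : ℕ) : tleW (mgB m) G = mgE2 G m := by
  have hmeas : MeasurableSet (Set.univ.pi fun _ : Fin 2 => Set.Icc (0:ℝ) 1) :=
    MeasurableSet.univ_pi fun _ => measurableSet_Icc
  have hstep : tleW (mgB m) G
      = ∫ x : Fin 2 → ℝ in Set.univ.pi fun _ => Set.Icc (0:ℝ) 1,
          mgTail G m (x 0) (x 1) := by
    refine setIntegral_congr_fun hmeas fun x hx => ?_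
    have hx0 : x 0 ∈ Set.Icc (0:ℝ) 1 := hx 0 (Set.mem_univ _)
    have hx1 : x 1 ∈ Set.Icc (0:ℝ) 1 := hx 1 (Set.mem_univ _)
    have hfil : (Finset.univ.filter (fun p : Fin 2 × Fin 2 => p.1 ≤ p.2))
        = ({(0,0), (0,1), (1,1)} : Finset (Fin 2 × Fin 2)) := by
      ext p
      simp only [Finset.mem_filter, Finset.mem_univ, true_and, Finset.mem_insert,
        Finset.mem_singleton]
      constructor
      · intro h
        fin_cases p <;> simp_all
      · rintro (rfl | rfl | rfl) <;> decide
    rw [hfil]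
    rw [Finset.prod_insert (by decide), Finset.prod_insert (by decide),
      Finset.prod_singleton]
    have e00 : mgB m 0 0 = 0 := by simp [mgB]
    have e01 : mgB m 0 1 = m := by simp [mgB]
    have e11 : mgB m 1 1 = 0 := by simp [mgB]
    have h1 : (∑' l : ℕ, G.W (x 0) (x 0) (mgB m 0 0 + l)) = 1 := by
      rw [e00]
      simpa using G.sum_one (x 0) hx0 (x 0) hx0
    have h3 : (∑' l : ℕ, G.W (x 1) (x 1) (mgB m 1 1 + l)) = 1 := by
      rw [e11]
      simpa using G.sum_one (x 1) hx1 (x 1) hx1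
    have h2 : (∑' l : ℕ, G.W (x 0) (x 1) (mgB m 0 1 + l)) = mgTail G m (x 0) (x 1) := by
      rw [e01]; rfl
    rw [h1, h2, h3]
    ring
  rw [hstep]
  have hmp := volume_preserving_piFinTwo (fun _ : Fin 2 => ℝ)
  have hemb := (MeasurableEquiv.piFinTwo (fun _ : Fin 2 => ℝ)).measurableEmbedding
  have hpre : (MeasurableEquiv.piFinTwo (fun _ : Fin 2 => ℝ)) ⁻¹' mgSq
      = Set.univ.pi fun _ => Set.Icc (0:ℝ) 1 := by
    ext x
    simp [MeasurableEquiv.piFinTwo, mgSq, Set.mem_pi, Prod.le_def, Pi.le_def,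
      Fin.forall_fin_two, Set.mem_Icc]

  rw [mgE2, ← hmp.setIntegral_preimage_emb hemb (fun z => mgTail G m z.1 z.2) mgSq, hpre]
  rfl

lemma tle_C (G : Multigraphon) (m : ℕ) : tleW (mgC m) G = mgD G (2 * m) := by
  have hmeas : MeasurableSet (Set.univ.pi fun _ : Fin 1 => Set.Icc (0:ℝ) 1) :=
    MeasurableSet.univ_pi fun _ => measurableSet_Icc
  have hstep : tleW (mgC m) G
      = ∫ x : Fin 1 → ℝ in Set.univ.pi fun _ => Set.Icc (0:ℝ) 1,
          mgTail G (2 * m) (x 0) (x 0) := by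
    refine setIntegral_congr_fun hmeas fun x hx => ?_
    have hfil : (Finset.univ.filter (fun p : Fin 1 × Fin 1 => p.1 ≤ p.2))
        = ({(0,0)} : Finset (Fin 1 × Fin 1)) := by
      ext p
      simp only [Finset.mem_filter, Finset.mem_univ, true_and, Finset.mem_singleton]
      constructor
      · intro _; exact Subsingleton.elim _ _
      · rintro rfl; decide
    rw [hfil, Finset.prod_singleton]
    rfl
  rw [hstep]
  have hmp := volume_preserving_funUnique (Fin 1) ℝ
  have hemb := (MeasurableEquiv.funUnique (Fin 1) ℝ).measurableEmbedding
  have hpre : (MeasurableEquiv.funUnique (Fin 1) ℝ) ⁻¹' (Set.Icc (0:ℝ) 1)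
      = Set.univ.pi fun _ => Set.Icc (0:ℝ) 1 := by
    ext x
    simp [MeasurableEquiv.funUnique, Set.mem_pi, Pi.le_def, Fin.forall_fin_one,
      Set.mem_Icc]

  rw [mgD, ← hmp.setIntegral_preimage_emb hemb (fun y => mgTail G (2*m) y y)
    (Set.Icc (0:ℝ) 1), hpre]
  rfl

/-- Every convergent sequence of multigraphons is tight. -/
theorem tight_of_convergent (Wseq : ℕ → Multigraphon)
    -- convergence: the homomorphism densities converge for every `A ∈ A_k` and the
    -- limiting multigraph parameter is non-defective
    (hconv : ∃ f : ∀ k : ℕ, Matrix (Fin k) (Fin k) ℕ → ℝ,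
      (∀ (k : ℕ) (A : Matrix (Fin k) (Fin k) ℕ), IsAdj A →
        Tendsto (fun n => tleW A (Wseq n)) atTop (nhds (f k A))) ∧
      (∀ (k : ℕ) (A : ℕ → Matrix (Fin k) (Fin k) ℕ), (∀ m, IsAdj (A m)) →
        Tendsto (fun m => numEdges (A m)) atTop atTop →
        Tendsto (fun m => f k (A m)) atTop (nhds 0))) :
    -- tightness
    Tendsto (fun m : ℕ => ⨆ n : ℕ,
        ∫ x in Set.Icc (0:ℝ) 1, ∫ y in Set.Icc (0:ℝ) 1,
          ∑' l : ℕ, (Wseq n).W x y (m + l)) atTop (nhds 0) ∧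
    Tendsto (fun m : ℕ => ⨆ n : ℕ,
        ∫ x in Set.Icc (0:ℝ) 1, ∑' l : ℕ, (Wseq n).W x x (m + l)) atTop (nhds 0) := by
  obtain ⟨f, hf1, hf2⟩ := hconv
  have hE : ∀ n m, (∫ x in Set.Icc (0:ℝ) 1, ∫ y in Set.Icc (0:ℝ) 1,
      ∑' l : ℕ, (Wseq n).W x y (m + l)) = mgE2 (Wseq n) m :=
    fun n m => mgE2_eq_iterated (Wseq n) m
  have hD : ∀ n m, (∫ x in Set.Icc (0:ℝ) 1, ∑' l : ℕ, (Wseq n).W x x (m + l))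
      = mgD (Wseq n) m := fun n m => rfl
  constructor
  · refine main_sup (fun n m => ∫ x in Set.Icc (0:ℝ) 1, ∫ y in Set.Icc (0:ℝ) 1,
        ∑' l : ℕ, (Wseq n).W x y (m + l)) (fun n m => ?_) (fun n => ?_) (fun n => ?_) ?_
    · simp only [hE]; exact mgE2_nonneg _ m
    · intro a b hab
      simp only [hE]; exact mgE2_anti _ hab
    · simp only [hE]; exact mgE2_tendsto _
    · intro ε hε
      have hnum : Tendsto (fun m => numEdges (mgB m)) atTop atTop := by
        simp only [mgB_edges]; exact tendsto_id
      have hfB := hf2 2 mgB mgB_adj hnum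
      obtain ⟨m₀, hm₀⟩ := (Metric.tendsto_atTop.1 hfB) (ε/2) (by linarith)
      obtain ⟨N, hN⟩ := (Metric.tendsto_atTop.1 (hf1 2 (mgB m₀) (mgB_adj m₀))) (ε/2)
        (by linarith)
      refine ⟨m₀, N, fun n hn => ?_⟩
      have ha := hN n hn
      have hb := hm₀ m₀ le_rfl
      rw [Real.dist_eq] at ha hb
      rw [sub_zero] at hb
      simp only [hE]
      rw [← tle_B]
      linarith [(abs_lt.1 ha).2, (abs_lt.1 hb).2]
  · refine main_sup (fun n m => ∫ x in Set.Icc (0:ℝ) 1,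
        ∑' l : ℕ, (Wseq n).W x x (m + l)) (fun n m => ?_) (fun n => ?_) (fun n => ?_) ?_
    · simp only [hD]; exact mgD_nonneg _ m
    · intro a b hab
      simp only [hD]; exact mgD_anti _ hab
    · simp only [hD]; exact mgD_tendsto _
    · intro ε hε
      have hnum : Tendsto (fun m => numEdges (mgC m)) atTop atTop := by
        simp only [mgC_edges]; exact tendsto_id
      have hfC := hf2 1 mgC mgC_adj hnum
      obtain ⟨m₀, hm₀⟩ := (Metric.tendsto_atTop.1 hfC) (ε/2) (by linarith)
      obtain ⟨N, hN⟩ := (Metric.tendsto_atTop.1 (hf1 1 (mgC m₀) (mgC_adj m₀))) (ε/2)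
        (by linarith)
      refine ⟨2 * m₀, N, fun n hn => ?_⟩
      have ha := hN n hn
      have hb := hm₀ m₀ le_rfl
      rw [Real.dist_eq] at ha hb
      rw [sub_zero] at hb
      simp only [hD]
      rw [← tle_C]
      linarith [(abs_lt.1 ha).2, (abs_lt.1 hb).2]
end

section
/- Every tight sequence (W_n)_{n=1}^∞ of multigraphons contains a convergent subsequence: if lim_{m→∞} sup_n ∫₀¹∫₀¹ ∑_{k=m}^∞ W_n(x,y,k) dx dy = 0 and lim_{m→∞} sup_n ∫₀¹ ∑_{k=m}^∞ W_n(x,x,k) dx = 0, then there is a subsequence (W_{n(m)})_{m=1}^∞ and a non-defective multigraph parameter f such that t_≤(A,W_{n(m)}) → f(A) as m → ∞ for every k ∈ ℕ and A ∈ A_k. -/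
open scoped Classical BigOperators
open Filter MeasureTheory

namespace MGaux

noncomputable def nu : Measure ℝ := volume.restrict (Set.Icc 0 1)

instance : IsProbabilityMeasure nu :=
  ⟨by rw [nu, Measure.restrict_apply_univ, Real.volume_Icc]; norm_num⟩

noncomputable def muk (k : ℕ) : Measure (Fin k → ℝ) := Measure.pi fun _ => nu

instance (k : ℕ) : IsProbabilityMeasure (muk k) := by rw [muk]; infer_instance

def cube (k : ℕ) : Set (Fin k → ℝ) := Set.univ.pi fun _ => Set.Icc (0:ℝ) 1

lemma measurableSet_cube (k : ℕ) : MeasurableSet (cube k) :=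
  MeasurableSet.univ_pi fun _ => measurableSet_Icc

lemma restrict_cube (k : ℕ) :
    (volume : Measure (Fin k → ℝ)).restrict (cube k) = muk k := by
  rw [muk]
  symm
  apply Measure.pi_eq
  intro s hs
  rw [Measure.restrict_apply (MeasurableSet.univ_pi hs)]
  have : (Set.univ.pi s) ∩ cube k = Set.univ.pi fun i => s i ∩ Set.Icc 0 1 := by
    rw [cube, ← Set.pi_inter_distrib]
  rw [this, volume_pi_pi]
  exact Finset.prod_congr rfl fun i _ =>
    (Measure.restrict_apply (hs i)).symm

lemma ae_cube (k : ℕ) : ∀ᵐ x ∂(muk k), x ∈ cube k := by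
  rw [← restrict_cube]
  exact ae_restrict_mem (measurableSet_cube k)

lemma ae_Icc : ∀ᵐ x ∂nu, x ∈ Set.Icc (0:ℝ) 1 := ae_restrict_mem measurableSet_Icc

noncomputable def tau (G : Multigraphon) (a : ℕ) (u v : ℝ) : ℝ := ∑' l, G.W u v (a + l)

lemma tau_nonneg (G : Multigraphon) (a : ℕ) (u v : ℝ) : 0 ≤ tau G a u v :=
  tsum_nonneg fun l => G.nonneg u v (a + l)

lemma tau_symm (G : Multigraphon) (a : ℕ) (u v : ℝ) : tau G a u v = tau G a v u :=
  tsum_congr fun l => G.symm u v (a + l)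

lemma summableW (G : Multigraphon) {u v : ℝ} (hu : u ∈ Set.Icc (0:ℝ) 1)
    (hv : v ∈ Set.Icc (0:ℝ) 1) : Summable (G.W u v) := by
  by_contra h
  have h0 := tsum_eq_zero_of_not_summable h
  rw [G.sum_one u hu v hv] at h0
  exact one_ne_zero h0

lemma tau_eq (G : Multigraphon) (a : ℕ) {u v : ℝ} (hu : u ∈ Set.Icc (0:ℝ) 1)
    (hv : v ∈ Set.Icc (0:ℝ) 1) :
    tau G a u v = 1 - ∑ m ∈ Finset.range a, G.W u v m := by
  have hs := summableW G hu hv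
  have h2 := Summable.sum_add_tsum_nat_add (f := G.W u v) a hs
  rw [G.sum_one u hu v hv] at h2
  rw [tau, eq_sub_iff_add_eq]
  rw [← h2, add_comm]
  congr 1
  exact tsum_congr fun l => by rw [add_comm]

lemma tau_le_one (G : Multigraphon) (a : ℕ) {u v : ℝ} (hu : u ∈ Set.Icc (0:ℝ) 1)
    (hv : v ∈ Set.Icc (0:ℝ) 1) : tau G a u v ≤ 1 := by
  rw [tau_eq G a hu hv]
  have : 0 ≤ ∑ m ∈ Finset.range a, G.W u v m :=
    Finset.sum_nonneg fun m _ => G.nonneg u v m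
  linarith


def pairs (k : ℕ) : Finset (Fin k × Fin k) :=
  Finset.univ.filter (fun p : Fin k × Fin k => p.1 ≤ p.2)

noncomputable def Phi {k : ℕ} (G : Multigraphon) (A : Matrix (Fin k) (Fin k) ℕ)
    (x : Fin k → ℝ) : ℝ :=
  ∏ p ∈ pairs k, tau G (A p.1 p.2) (x p.1) (x p.2)

noncomputable def PhiM {k : ℕ} (G : Multigraphon) (A : Matrix (Fin k) (Fin k) ℕ)
    (x : Fin k → ℝ) : ℝ :=
  ∏ p ∈ pairs k, (1 - ∑ m ∈ Finset.range (A p.1 p.2), G.W (x p.1) (x p.2) m)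

lemma measurable_PhiM {k : ℕ} (G : Multigraphon) (A : Matrix (Fin k) (Fin k) ℕ) :
    Measurable (PhiM G A) := by
  apply Finset.measurable_prod
  intro p _
  apply Measurable.const_sub
  apply Finset.measurable_sum
  intro m _
  have h1 : Measurable fun x : Fin k → ℝ => (x p.1, x p.2) :=
    (measurable_pi_apply p.1).prodMk (measurable_pi_apply p.2)
  exact (G.measurable m).comp h1

lemma Phi_eq_on_cube {k : ℕ} (G : Multigraphon) (A : Matrix (Fin k) (Fin k) ℕ)
    {x : Fin k → ℝ} (hx : x ∈ cube k) : Phi G A x = PhiM G A x := by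
  refine Finset.prod_congr rfl fun p _ => ?_
  exact tau_eq G _ (hx p.1 (Set.mem_univ _)) (hx p.2 (Set.mem_univ _))

lemma Phi_nonneg {k : ℕ} (G : Multigraphon) (A : Matrix (Fin k) (Fin k) ℕ)
    (x : Fin k → ℝ) : 0 ≤ Phi G A x :=
  Finset.prod_nonneg fun p _ => tau_nonneg G _ _ _

lemma Phi_le_one {k : ℕ} (G : Multigraphon) (A : Matrix (Fin k) (Fin k) ℕ)
    {x : Fin k → ℝ} (hx : x ∈ cube k) : Phi G A x ≤ 1 :=
  Finset.prod_le_one (fun p _ => tau_nonneg G _ _ _)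
    (fun p _ => tau_le_one G _ (hx p.1 (Set.mem_univ _)) (hx p.2 (Set.mem_univ _)))

lemma aesm_Phi {k : ℕ} (G : Multigraphon) (A : Matrix (Fin k) (Fin k) ℕ) :
    AEStronglyMeasurable (Phi G A) (muk k) :=
  ((measurable_PhiM G A).aestronglyMeasurable).congr
    ((ae_cube k).mono fun x hx => (Phi_eq_on_cube G A hx).symm)

lemma integrable_Phi {k : ℕ} (G : Multigraphon) (A : Matrix (Fin k) (Fin k) ℕ) :
    Integrable (Phi G A) (muk k) := by
  refine Integrable.mono' (integrable_const 1) (aesm_Phi G A)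
    ((ae_cube k).mono fun x hx => ?_)
  rw [Real.norm_eq_abs, abs_of_nonneg (Phi_nonneg G A x)]
  exact Phi_le_one G A hx

lemma tleW_eq {k : ℕ} (A : Matrix (Fin k) (Fin k) ℕ) (G : Multigraphon) :
    tleW A G = ∫ x, Phi G A x ∂(muk k) := by
  rw [tleW, ← restrict_cube k]
  rfl

lemma tleW_nonneg {k : ℕ} (A : Matrix (Fin k) (Fin k) ℕ) (G : Multigraphon) :
    0 ≤ tleW A G := by
  rw [tleW_eq]
  exact integral_nonneg fun x => Phi_nonneg G A x

lemma tleW_le_one {k : ℕ} (A : Matrix (Fin k) (Fin k) ℕ) (G : Multigraphon) :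
    tleW A G ≤ 1 := by
  rw [tleW_eq]
  calc ∫ x, Phi G A x ∂(muk k) ≤ ∫ _, (1:ℝ) ∂(muk k) :=
        integral_mono_ae (integrable_Phi G A) (integrable_const 1)
          ((ae_cube k).mono fun x hx => Phi_le_one G A hx)
    _ = 1 := by simp


lemma prod_pairs_eq_sqrt {k : ℕ} (g : Fin k → Fin k → ℝ) (h0 : ∀ i j, 0 ≤ g i j)
    (hs : ∀ i j, g i j = g j i) :
    ∏ p ∈ pairs k, g p.1 p.2
      = Real.sqrt ((∏ p : Fin k × Fin k, g p.1 p.2) * ∏ i, g i i) := by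
  set P := ∏ p ∈ pairs k, g p.1 p.2 with hP
  have hP0 : 0 ≤ P := Finset.prod_nonneg fun p _ => h0 _ _
  have hswap : P = ∏ p ∈ Finset.univ.filter (fun p : Fin k × Fin k => p.2 ≤ p.1), g p.1 p.2 := by
    rw [hP, pairs]
    refine Finset.prod_equiv (Equiv.prodComm (Fin k) (Fin k)) ?_ ?_
    · intro p
      simp [Equiv.prodComm]
    · intro p _
      exact hs p.1 p.2
  have hsplit : (∏ p : Fin k × Fin k, g p.1 p.2)
      = P * ∏ p ∈ Finset.univ.filter (fun p : Fin k × Fin k => ¬ p.1 ≤ p.2), g p.1 p.2 := by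
    rw [hP, pairs]
    exact (Finset.prod_filter_mul_prod_filter_not Finset.univ _ _).symm
  have hQsplit : (∏ p ∈ Finset.univ.filter (fun p : Fin k × Fin k => p.2 ≤ p.1), g p.1 p.2)
      = (∏ p ∈ Finset.univ.filter (fun p : Fin k × Fin k => p.1 = p.2), g p.1 p.2)
        * ∏ p ∈ Finset.univ.filter (fun p : Fin k × Fin k => ¬ p.1 ≤ p.2), g p.1 p.2 := by
    rw [← Finset.prod_filter_mul_prod_filter_not
      (Finset.univ.filter (fun p : Fin k × Fin k => p.2 ≤ p.1))
      (fun p : Fin k × Fin k => p.1 ≤ p.2) (fun p => g p.1 p.2)]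
    congr 1
    · congr 1
      rw [Finset.filter_filter]
      apply Finset.filter_congr
      intro p _
      constructor
      · rintro ⟨h1, h2⟩; exact le_antisymm h2 h1
      · intro h; exact ⟨le_of_eq h.symm, le_of_eq h⟩
    · congr 1
      rw [Finset.filter_filter]
      apply Finset.filter_congr
      intro p _
      constructor
      · rintro ⟨_, h2⟩; exact h2
      · intro h; exact ⟨le_of_lt (lt_of_not_ge h), h⟩
  have hdiag : (∏ p ∈ Finset.univ.filter (fun p : Fin k × Fin k => p.1 = p.2), g p.1 p.2)
      = ∏ i, g i i := by
    have himg : Finset.univ.filter (fun p : Fin k × Fin k => p.1 = p.2)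
        = Finset.univ.image (fun i : Fin k => (i, i)) := by
      ext p
      simp only [Finset.mem_filter, Finset.mem_univ, true_and, Finset.mem_image]
      constructor
      · intro h
        exact ⟨p.1, by rw [Prod.ext_iff]; exact ⟨rfl, h⟩⟩
      · rintro ⟨i, rfl⟩
        rfl
    rw [himg, Finset.prod_image]
    intro i _ j _ hij
    exact (Prod.ext_iff.1 hij).1
  have hPP : P * P = (∏ p : Fin k × Fin k, g p.1 p.2) * ∏ i, g i i := by
    calc P * P = P * (∏ p ∈ Finset.univ.filter (fun p : Fin k × Fin k => p.2 ≤ p.1), g p.1 p.2) := by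
          rw [← hswap]
      _ = (∏ p : Fin k × Fin k, g p.1 p.2) * ∏ i, g i i := by
          rw [hQsplit, hdiag, hsplit]; ring
  rw [← hPP, Real.sqrt_mul_self hP0]


noncomputable def permME {k : ℕ} (σ : Equiv.Perm (Fin k)) : (Fin k → ℝ) ≃ᵐ (Fin k → ℝ) where
  toEquiv := σ.arrowCongr (Equiv.refl ℝ)
  measurable_toFun := measurable_pi_lambda _ fun j => measurable_pi_apply _
  measurable_invFun := measurable_pi_lambda _ fun j => measurable_pi_apply _

lemma permME_apply {k : ℕ} (σ : Equiv.Perm (Fin k)) (x : Fin k → ℝ) (j : Fin k) :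
    permME σ x j = x (σ.symm j) := rfl

lemma measurePreserving_permME {k : ℕ} (σ : Equiv.Perm (Fin k)) :
    MeasurePreserving (permME σ) (muk k) (muk k) := by
  refine ⟨(permME σ).measurable, ?_⟩
  conv_lhs => rw [muk]
  conv_rhs => rw [muk]
  symm
  apply Measure.pi_eq
  intro s hs
  rw [Measure.map_apply (permME σ).measurable (MeasurableSet.univ_pi hs)]
  have hpre : (permME σ) ⁻¹' (Set.univ.pi s) = Set.univ.pi fun i => s (σ i) := by
    ext x
    simp only [Set.mem_preimage, Set.mem_univ_pi]
    constructor
    · intro h i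
      have := h (σ i)
      rwa [permME_apply, Equiv.symm_apply_apply] at this
    · intro h j
      rw [permME_apply]
      have := h (σ.symm j)
      rwa [Equiv.apply_symm_apply] at this
  rw [hpre, Measure.pi_pi]
  exact Equiv.prod_comp σ fun i => nu (s i)

lemma Phi_perm {k : ℕ} (σ : Equiv.Perm (Fin k)) (A : Matrix (Fin k) (Fin k) ℕ)
    (hA : ∀ i j, A i j = A j i) (G : Multigraphon) (x : Fin k → ℝ) :
    Phi G (Matrix.of fun i j => A (σ i) (σ j)) x = Phi G A (permME σ x) := by
  rw [Phi, Phi]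
  rw [prod_pairs_eq_sqrt (fun i j => tau G ((Matrix.of fun i j => A (σ i) (σ j)) i j) (x i) (x j))
      (fun i j => tau_nonneg G _ _ _)
      (fun i j => by dsimp only [Matrix.of_apply]; rw [hA (σ i) (σ j), tau_symm]),
    prod_pairs_eq_sqrt (fun i j => tau G (A i j) (permME σ x i) (permME σ x j))
      (fun i j => tau_nonneg G _ _ _)
      (fun i j => by rw [hA i j, tau_symm])]
  congr 1
  congr 1
  · rw [← Equiv.prod_comp (σ.prodCongr σ)
      (fun p : Fin k × Fin k => tau G (A p.1 p.2) (permME σ x p.1) (permME σ x p.2))]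
    refine Finset.prod_congr rfl fun p _ => ?_
    simp only [Equiv.prodCongr_apply, Prod.map_fst, Prod.map_snd, Matrix.of_apply,
      permME_apply, Equiv.symm_apply_apply]
  · rw [← Equiv.prod_comp σ (fun i : Fin k => tau G (A i i) (permME σ x i) (permME σ x i))]
    refine Finset.prod_congr rfl fun i _ => ?_
    simp only [Matrix.of_apply, permME_apply, Equiv.symm_apply_apply]

lemma tleW_perm {k : ℕ} (σ : Equiv.Perm (Fin k)) (A : Matrix (Fin k) (Fin k) ℕ)
    (hA : ∀ i j, A i j = A j i) (G : Multigraphon) :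
    tleW (Matrix.of fun i j => A (σ i) (σ j)) G = tleW A G := by
  rw [tleW_eq, tleW_eq]
  calc ∫ x, Phi G (Matrix.of fun i j => A (σ i) (σ j)) x ∂(muk k)
      = ∫ x, Phi G A (permME σ x) ∂(muk k) := by
        exact integral_congr_ae (Filter.Eventually.of_forall fun x => Phi_perm σ A hA G x)
    _ = ∫ y, Phi G A y ∂(muk k) :=
        (measurePreserving_permME σ).integral_comp (permME σ).measurableEmbedding _


lemma map_eval {k : ℕ} (i : Fin k) :
    Measure.map (fun x : Fin k → ℝ => x i) (muk k) = nu := by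
  refine Measure.ext fun s hs => ?_
  rw [Measure.map_apply (measurable_pi_apply i) hs]
  have hpre : (fun x : Fin k → ℝ => x i) ⁻¹' s
      = Set.univ.pi fun l => if l = i then s else Set.univ := by
    ext x
    simp only [Set.mem_preimage, Set.mem_univ_pi]
    constructor
    · intro h l
      by_cases hl : l = i
      · subst hl; simp [h]
      · simp [hl]
    · intro h
      have := h i
      simpa using this
  rw [hpre, muk, Measure.pi_pi]
  rw [← Finset.mul_prod_erase Finset.univ _ (Finset.mem_univ i)]
  rw [if_pos rfl]
  rw [Finset.prod_eq_one fun l hl => by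
    rw [if_neg (Finset.ne_of_mem_erase hl)]; exact measure_univ]
  exact mul_one _

lemma map_pair {k : ℕ} {i j : Fin k} (hij : i ≠ j) :
    Measure.map (fun x : Fin k → ℝ => (x i, x j)) (muk k) = nu.prod nu := by
  symm
  refine Measure.prod_eq fun s t hs ht => ?_
  rw [Measure.map_apply ((measurable_pi_apply i).prodMk (measurable_pi_apply j)) (hs.prod ht)]
  have hpre : (fun x : Fin k → ℝ => (x i, x j)) ⁻¹' (s ×ˢ t)
      = Set.univ.pi fun l => if l = i then s else if l = j then t else Set.univ := by
    ext x
    simp only [Set.mem_preimage, Set.mem_prod, Set.mem_univ_pi]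
    constructor
    · rintro ⟨h1, h2⟩ l
      by_cases hl : l = i
      · subst hl; simp [h1]
      · by_cases hl2 : l = j
        · subst hl2; simp [hl, h2]
        · simp [hl, hl2]
    · intro h
      have h1 := h i
      have h2 := h j
      rw [if_pos rfl] at h1
      rw [if_neg hij.symm, if_pos rfl] at h2
      exact ⟨h1, h2⟩
  rw [hpre, muk, Measure.pi_pi]
  rw [← Finset.mul_prod_erase Finset.univ _ (Finset.mem_univ i)]
  rw [← Finset.mul_prod_erase _ _ (Finset.mem_erase.2 ⟨hij.symm, Finset.mem_univ j⟩)]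
  rw [if_pos rfl, if_neg hij.symm, if_pos rfl]
  rw [Finset.prod_eq_one fun l hl => by
    have hl2 := Finset.ne_of_mem_erase hl
    have hl1 := Finset.ne_of_mem_erase (Finset.mem_of_mem_erase hl)
    rw [if_neg hl1, if_neg hl2]; exact measure_univ]
  rw [mul_one]

lemma aesm_tau_prod (G : Multigraphon) (a : ℕ) :
    AEStronglyMeasurable (fun z : ℝ × ℝ => tau G a z.1 z.2) (nu.prod nu) := by
  have hmem : ∀ᵐ z ∂(nu.prod nu), z ∈ Set.Icc (0:ℝ) 1 ×ˢ Set.Icc (0:ℝ) 1 := by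
    rw [nu, Measure.prod_restrict]
    exact ae_restrict_mem (measurableSet_Icc.prod measurableSet_Icc)
  have hmeas : Measurable fun z : ℝ × ℝ => 1 - ∑ m ∈ Finset.range a, G.W z.1 z.2 m := by
    apply Measurable.const_sub
    exact Finset.measurable_sum _ fun m _ => G.measurable m
  refine hmeas.aestronglyMeasurable.congr (hmem.mono fun z hz => ?_)
  exact (tau_eq G a hz.1 hz.2).symm

lemma integrable_tau_prod (G : Multigraphon) (a : ℕ) :
    Integrable (fun z : ℝ × ℝ => tau G a z.1 z.2) (nu.prod nu) := by
  have hmem : ∀ᵐ z ∂(nu.prod nu), z ∈ Set.Icc (0:ℝ) 1 ×ˢ Set.Icc (0:ℝ) 1 := by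
    rw [nu, Measure.prod_restrict]
    exact ae_restrict_mem (measurableSet_Icc.prod measurableSet_Icc)
  refine Integrable.mono' (integrable_const 1) (aesm_tau_prod G a) (hmem.mono fun z hz => ?_)
  rw [Real.norm_eq_abs, abs_of_nonneg (tau_nonneg G a _ _)]
  exact tau_le_one G a hz.1 hz.2

lemma integral_pair {k : ℕ} {i j : Fin k} (hij : i ≠ j) (G : Multigraphon) (a : ℕ) :
    ∫ x, tau G a (x i) (x j) ∂(muk k) = ∫ u, ∫ v, tau G a u v ∂nu ∂nu := by
  have hphi : Measurable fun x : Fin k → ℝ => (x i, x j) :=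
    (measurable_pi_apply i).prodMk (measurable_pi_apply j)
  have h1 : ∫ z : ℝ × ℝ, tau G a z.1 z.2
        ∂(Measure.map (fun x : Fin k → ℝ => (x i, x j)) (muk k))
      = ∫ x, tau G a (x i) (x j) ∂(muk k) := by
    apply integral_map hphi.aemeasurable
    rw [map_pair hij]
    exact aesm_tau_prod G a
  rw [← h1, map_pair hij]
  exact integral_prod _ (integrable_tau_prod G a)

lemma aesm_tau_diag (G : Multigraphon) (a : ℕ) :
    AEStronglyMeasurable (fun u : ℝ => tau G a u u) nu := by
  have hmeas : Measurable fun u : ℝ => 1 - ∑ m ∈ Finset.range a, G.W u u m := by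
    apply Measurable.const_sub
    refine Finset.measurable_sum _ fun m _ => ?_
    have h1 : Measurable fun u : ℝ => (u, u) := measurable_id.prodMk measurable_id
    exact (G.measurable m).comp h1
  refine hmeas.aestronglyMeasurable.congr (ae_Icc.mono fun u hu => ?_)
  exact (tau_eq G a hu hu).symm

lemma integral_diag {k : ℕ} (i : Fin k) (G : Multigraphon) (a : ℕ) :
    ∫ x, tau G a (x i) (x i) ∂(muk k) = ∫ u, tau G a u u ∂nu := by
  have h1 : ∫ u, tau G a u u ∂(Measure.map (fun x : Fin k → ℝ => x i) (muk k))
      = ∫ x, tau G a (x i) (x i) ∂(muk k) := by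
    apply integral_map (measurable_pi_apply i).aemeasurable
    rw [map_eval i]
    exact aesm_tau_diag G a
  rw [← h1, map_eval i]

lemma integrable_tau_single {k : ℕ} (G : Multigraphon) (a : ℕ) (i j : Fin k) :
    Integrable (fun x : Fin k → ℝ => tau G a (x i) (x j)) (muk k) := by
  have hmeas : Measurable fun x : Fin k → ℝ =>
      1 - ∑ m ∈ Finset.range a, G.W (x i) (x j) m := by
    apply Measurable.const_sub
    refine Finset.measurable_sum _ fun m _ => ?_
    have h1 : Measurable fun x : Fin k → ℝ => (x i, x j) :=
      (measurable_pi_apply i).prodMk (measurable_pi_apply j)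
    exact (G.measurable m).comp h1
  have haesm : AEStronglyMeasurable (fun x : Fin k → ℝ => tau G a (x i) (x j)) (muk k) :=
    hmeas.aestronglyMeasurable.congr ((ae_cube k).mono fun x hx =>
      (tau_eq G a (hx i (Set.mem_univ _)) (hx j (Set.mem_univ _))).symm)
  refine Integrable.mono' (integrable_const 1) haesm ((ae_cube k).mono fun x hx => ?_)
  rw [Real.norm_eq_abs, abs_of_nonneg (tau_nonneg G a _ _)]
  exact tau_le_one G a (hx i (Set.mem_univ _)) (hx j (Set.mem_univ _))

lemma tleW_le_factor {k : ℕ} (A : Matrix (Fin k) (Fin k) ℕ) (G : Multigraphon)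
    {p : Fin k × Fin k} (hp : p.1 ≤ p.2) :
    tleW A G ≤ ∫ x, tau G (A p.1 p.2) (x p.1) (x p.2) ∂(muk k) := by
  rw [tleW_eq]
  refine integral_mono_ae (integrable_Phi G A) (integrable_tau_single G _ p.1 p.2)
    ((ae_cube k).mono fun x hx => ?_)
  have hmem : p ∈ pairs k := Finset.mem_filter.2 ⟨Finset.mem_univ _, hp⟩
  rw [Phi, ← Finset.mul_prod_erase _ _ hmem]
  have h1 : ∏ q ∈ (pairs k).erase p, tau G (A q.1 q.2) (x q.1) (x q.2) ≤ 1 :=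
    Finset.prod_le_one (fun q _ => tau_nonneg G _ _ _)
      (fun q _ => tau_le_one G _ (hx q.1 (Set.mem_univ _)) (hx q.2 (Set.mem_univ _)))
  have h2 : 0 ≤ tau G (A p.1 p.2) (x p.1) (x p.2) := tau_nonneg G _ _ _
  calc tau G (A p.1 p.2) (x p.1) (x p.2)
        * ∏ q ∈ (pairs k).erase p, tau G (A q.1 q.2) (x q.1) (x q.2)
      ≤ tau G (A p.1 p.2) (x p.1) (x p.2) * 1 := by
        exact mul_le_mul_of_nonneg_left h1 h2
    _ = tau G (A p.1 p.2) (x p.1) (x p.2) := mul_one _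

lemma integral_le_one_of_ae {α : Type*} [MeasurableSpace α] (μ : Measure α)
    [IsProbabilityMeasure μ] {g : α → ℝ} (h : ∀ᵐ x ∂μ, g x ≤ 1) : ∫ x, g x ∂μ ≤ 1 := by
  by_cases hg : Integrable g μ
  · calc ∫ x, g x ∂μ ≤ ∫ _, (1:ℝ) ∂μ := integral_mono_ae hg (integrable_const 1) h
      _ = 1 := by simp
  · rw [integral_undef hg]; exact zero_le_one

end MGaux

open MGaux

/-- Every tight sequence of multigraphons contains a convergent subsequence. -/
theorem exists_convergent_subsequence_of_tight (Wseq : ℕ → Multigraphon)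
    -- tightness
    (htight₁ : Tendsto (fun m : ℕ => ⨆ n : ℕ,
        ∫ x in Set.Icc (0:ℝ) 1, ∫ y in Set.Icc (0:ℝ) 1,
          ∑' l : ℕ, (Wseq n).W x y (m + l)) atTop (nhds 0))
    (htight₂ : Tendsto (fun m : ℕ => ⨆ n : ℕ,
        ∫ x in Set.Icc (0:ℝ) 1, ∑' l : ℕ, (Wseq n).W x x (m + l)) atTop (nhds 0)) :
    ∃ (φ : ℕ → ℕ) (f : ∀ k : ℕ, Matrix (Fin k) (Fin k) ℕ → ℝ),
      StrictMono φ ∧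
      -- `f` is a multigraph parameter: invariance under relabeling
      (∀ (k : ℕ) (σ : Equiv.Perm (Fin k)) (A : Matrix (Fin k) (Fin k) ℕ), IsAdj A →
        f k (Matrix.of fun i j => A (σ i) (σ j)) = f k A) ∧
      -- `f` is non-defective
      (∀ (k : ℕ) (A : ℕ → Matrix (Fin k) (Fin k) ℕ), (∀ m, IsAdj (A m)) →
        Tendsto (fun m => numEdges (A m)) atTop atTop →
        Tendsto (fun m => f k (A m)) atTop (nhds 0)) ∧
      -- the subsequence converges to `f`
      (∀ (k : ℕ) (A : Matrix (Fin k) (Fin k) ℕ), IsAdj A →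
        Tendsto (fun m => tleW A (Wseq (φ m))) atTop (nhds (f k A))) := by
  haveI : ∀ k : ℕ, Countable (Matrix (Fin k) (Fin k) ℕ) := fun k =>
    Countable.of_equiv _ (Matrix.of (m := Fin k) (n := Fin k) (α := ℕ))
  haveI hcnt : Countable ((k : ℕ) × Matrix (Fin k) (Fin k) ℕ) := inferInstance
  set s : Set ((p : (k : ℕ) × Matrix (Fin k) (Fin k) ℕ) → ℝ) :=
    Set.univ.pi fun _ => Set.Icc (0:ℝ) 1 with hs_def
  have hcomp : IsCompact s := isCompact_univ_pi fun _ => isCompact_Icc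
  set u : ℕ → ((p : (k : ℕ) × Matrix (Fin k) (Fin k) ℕ) → ℝ) :=
    fun n p => tleW p.2 (Wseq n) with hu_def
  have hmem : ∀ n, u n ∈ s := fun n =>
    Set.mem_univ_pi.2 fun p => Set.mem_Icc.2 ⟨tleW_nonneg _ _, tleW_le_one _ _⟩
  obtain ⟨a, -, φ, hφ, hconv⟩ := hcomp.tendsto_subseq hmem
  have hpt : ∀ p : (k : ℕ) × Matrix (Fin k) (Fin k) ℕ,
      Tendsto (fun m => tleW p.2 (Wseq (φ m))) atTop (nhds (a p)) := fun p =>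
    tendsto_pi_nhds.1 hconv p
  refine ⟨φ, fun k A => a ⟨k, A⟩, hφ, ?_, ?_, fun k A _ => hpt ⟨k, A⟩⟩
  · intro k σ A hA
    exact tendsto_nhds_unique
      ((hpt ⟨k, Matrix.of fun i j => A (σ i) (σ j)⟩).congr
        (fun m => tleW_perm σ A hA.1 (Wseq (φ m)))) (hpt ⟨k, A⟩)
  · intro k A hAdj hE
    have hk : 0 < k := by
      by_contra h
      have hk0 : k = 0 := Nat.eq_zero_of_le_zero (Nat.le_of_not_lt h)
      subst hk0
      obtain ⟨m, hm⟩ := (hE.eventually_ge_atTop 1).exists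
      simp [numEdges] at hm
    haveI : Nonempty (Fin k × Fin k) := ⟨(⟨0, hk⟩, ⟨0, hk⟩)⟩
    set c : ℕ → ℕ := fun m => Finset.univ.sup fun p : Fin k × Fin k => A m p.1 p.2 with hc_def
    have hsum : ∀ m, numEdges (A m) ≤ k * k * c m := by
      intro m
      have h1 : (∑ i, ∑ j, A m i j) = ∑ p : Fin k × Fin k, A m p.1 p.2 := by
        rw [← Finset.univ_product_univ, Finset.sum_product]
      have h2 : (∑ p : Fin k × Fin k, A m p.1 p.2) ≤ Fintype.card (Fin k × Fin k) * c m := by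
        have := Finset.sum_le_card_nsmul Finset.univ
          (fun p : Fin k × Fin k => A m p.1 p.2) (c m)
          (fun p _ => by
            rw [hc_def]
            exact Finset.le_sup (f := fun p : Fin k × Fin k => A m p.1 p.2)
              (Finset.mem_univ p))
        simpa [Finset.card_univ] using this
      have h3 : Fintype.card (Fin k × Fin k) = k * k := by simp
      calc numEdges (A m) ≤ ∑ i, ∑ j, A m i j := Nat.div_le_self _ _
        _ ≤ k * k * c m := by rw [h1]; rw [h3] at h2; exact h2
    have hc : Tendsto c atTop atTop := by
      rw [tendsto_atTop_atTop]
      intro b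
      obtain ⟨N, hN⟩ := tendsto_atTop_atTop.1 hE (k * k * b)
      refine ⟨N, fun m hm => ?_⟩
      have h1 := le_trans (hN m hm) (hsum m)
      exact Nat.le_of_mul_le_mul_left h1 (Nat.mul_pos hk hk)
    set S₁ : ℕ → ℝ := fun m : ℕ => ⨆ n : ℕ,
        ∫ x in Set.Icc (0:ℝ) 1, ∫ y in Set.Icc (0:ℝ) 1,
          ∑' l : ℕ, (Wseq n).W x y (m + l) with hS₁_def
    set S₂ : ℕ → ℝ := fun m : ℕ => ⨆ n : ℕ,
        ∫ x in Set.Icc (0:ℝ) 1, ∑' l : ℕ, (Wseq n).W x x (m + l) with hS₂_def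
    have hIoff_le : ∀ (n m' : ℕ),
        (∫ x in Set.Icc (0:ℝ) 1, ∫ y in Set.Icc (0:ℝ) 1,
          ∑' l : ℕ, (Wseq n).W x y (m' + l)) ≤ 1 := by
      intro n m'
      refine integral_le_one_of_ae nu (ae_Icc.mono fun x hx => ?_)
      exact integral_le_one_of_ae nu (ae_Icc.mono fun y hy => tau_le_one (Wseq n) m' hx hy)
    have hIoff_nonneg : ∀ (n m' : ℕ),
        (0:ℝ) ≤ ∫ x in Set.Icc (0:ℝ) 1, ∫ y in Set.Icc (0:ℝ) 1,
          ∑' l : ℕ, (Wseq n).W x y (m' + l) := fun n m' =>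
      integral_nonneg fun x => integral_nonneg fun y => tau_nonneg (Wseq n) m' x y
    have hIdiag_le : ∀ (n m' : ℕ),
        (∫ x in Set.Icc (0:ℝ) 1, ∑' l : ℕ, (Wseq n).W x x (m' + l)) ≤ 1 := by
      intro n m'
      exact integral_le_one_of_ae nu (ae_Icc.mono fun x hx => tau_le_one (Wseq n) m' hx hx)
    have hIdiag_nonneg : ∀ (n m' : ℕ),
        (0:ℝ) ≤ ∫ x in Set.Icc (0:ℝ) 1, ∑' l : ℕ, (Wseq n).W x x (m' + l) := fun n m' =>
      integral_nonneg fun x => tau_nonneg (Wseq n) m' x x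
    have hbdd₁ : ∀ m', BddAbove (Set.range fun n : ℕ =>
        ∫ x in Set.Icc (0:ℝ) 1, ∫ y in Set.Icc (0:ℝ) 1,
          ∑' l : ℕ, (Wseq n).W x y (m' + l)) := fun m' =>
      ⟨1, by rintro y ⟨n, rfl⟩; exact hIoff_le n m'⟩
    have hbdd₂ : ∀ m', BddAbove (Set.range fun n : ℕ =>
        ∫ x in Set.Icc (0:ℝ) 1, ∑' l : ℕ, (Wseq n).W x x (m' + l)) := fun m' =>
      ⟨1, by rintro y ⟨n, rfl⟩; exact hIdiag_le n m'⟩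
    have hS₁_nonneg : ∀ m', (0:ℝ) ≤ S₁ m' := fun m' =>
      le_trans (hIoff_nonneg 0 m') (le_ciSup (hbdd₁ m') 0)
    have hS₂_nonneg : ∀ m', (0:ℝ) ≤ S₂ m' := fun m' =>
      le_trans (hIdiag_nonneg 0 m') (le_ciSup (hbdd₂ m') 0)
    have hbound : ∀ m n, tleW (A m) (Wseq n) ≤ S₁ (c m) + S₂ (c m) := by
      intro m n
      obtain ⟨p, -, hp⟩ := Finset.exists_mem_eq_sup Finset.univ Finset.univ_nonempty
        (fun p : Fin k × Fin k => A m p.1 p.2)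
      obtain ⟨q1, q2, hq_le, hq_val⟩ :
          ∃ q1 q2 : Fin k, q1 ≤ q2 ∧ A m q1 q2 = c m := by
        rcases le_total p.1 p.2 with h | h
        · exact ⟨p.1, p.2, h, hp.symm⟩
        · exact ⟨p.2, p.1, h, by rw [(hAdj m).1]; exact hp.symm⟩
      rcases eq_or_ne q1 q2 with hd | hd
      · subst hd
        have h1 := tleW_le_factor (A m) (Wseq n) (p := (q1, q1)) le_rfl
        have h2 : ∫ x : Fin k → ℝ, tau (Wseq n) (A m q1 q1) (x q1) (x q1) ∂(muk k)
            = ∫ x in Set.Icc (0:ℝ) 1, ∑' l : ℕ, (Wseq n).W x x (A m q1 q1 + l) :=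
          integral_diag q1 (Wseq n) (A m q1 q1)
        have h3 : (∫ x in Set.Icc (0:ℝ) 1, ∑' l : ℕ, (Wseq n).W x x (A m q1 q1 + l))
            ≤ S₂ (A m q1 q1) := le_ciSup (hbdd₂ (A m q1 q1)) n
        have h4 : tleW (A m) (Wseq n) ≤ S₂ (c m) := by
          rw [← hq_val]
          exact le_trans h1 (le_of_eq h2 |>.trans h3)
        linarith [hS₁_nonneg (c m)]
      · have h1 := tleW_le_factor (A m) (Wseq n) (p := (q1, q2)) hq_le
        have h2 : ∫ x : Fin k → ℝ, tau (Wseq n) (A m q1 q2) (x q1) (x q2) ∂(muk k)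
            = ∫ x in Set.Icc (0:ℝ) 1, ∫ y in Set.Icc (0:ℝ) 1,
                ∑' l : ℕ, (Wseq n).W x y (A m q1 q2 + l) :=
          integral_pair hd (Wseq n) (A m q1 q2)
        have h3 : (∫ x in Set.Icc (0:ℝ) 1, ∫ y in Set.Icc (0:ℝ) 1,
              ∑' l : ℕ, (Wseq n).W x y (A m q1 q2 + l))
            ≤ S₁ (A m q1 q2) := le_ciSup (hbdd₁ (A m q1 q2)) n
        have h4 : tleW (A m) (Wseq n) ≤ S₁ (c m) := by
          rw [← hq_val]
          exact le_trans h1 (le_of_eq h2 |>.trans h3)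
        linarith [hS₂_nonneg (c m)]
    have h0 : ∀ m, (0:ℝ) ≤ a ⟨k, A m⟩ := fun m =>
      ge_of_tendsto (hpt ⟨k, A m⟩) (Eventually.of_forall fun n => tleW_nonneg _ _)
    have hle : ∀ m, a ⟨k, A m⟩ ≤ S₁ (c m) + S₂ (c m) := fun m =>
      le_of_tendsto (hpt ⟨k, A m⟩) (Eventually.of_forall fun n => hbound m (φ n))
    have hC : Tendsto (fun m => S₁ (c m) + S₂ (c m)) atTop (nhds 0) := by
      have := (htight₁.comp hc).add (htight₂.comp hc)
      simpa using this
    exact tendsto_of_tendsto_of_tendsto_of_le_of_le tendsto_const_nhds hC h0 hle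
end

section
/- Let (X(i,j))_{i,j ∈ ℤ∖{0}} be an ℕ₀-valued symmetric array (X(i,j) = X(j,i) a.s., X(i,i) even a.s.) whose joint distribution is invariant under every finitely supported permutation of the index set ℤ∖{0}. Then the family of random variables (X(i,j))_{1 ≤ i ≤ j} is conditionally independent given the σ-algebra generated by the family (X(i,j) : i < 0, j ∈ ℤ∖{0}). -/
open MeasureTheory ProbabilityTheory
open scoped BigOperators

/-- Nonzero integers: the index set `ℤ ∖ {0}`. -/
abbrev NZ : Type := {z : ℤ // z ≠ 0}
/-- Negative integers `ℤ₋`. -/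
abbrev NegZ : Type := {z : ℤ // z < 0}
/-- Positive integers (the copy of `ℕ = {1,2,…}` inside `ℤ ∖ {0}`). -/
abbrev PosZ : Type := {z : ℤ // 0 < z}

def negToNZ (z : NegZ) : NZ := ⟨z.1, z.2.ne⟩
def posToNZ (z : PosZ) : NZ := ⟨z.1, z.2.ne'⟩

/-- A family `(Y_v)_{v ∈ V}` of random variables is conditionally independent given a
sub-σ-algebra `m'` if for every finite subfamily and all bounded measurable real
functions `g_v`, `E[∏ g_v(Y_v) | m'] = ∏ E[g_v(Y_v) | m']` almost surely. -/
def CondIndepFam {Ω : Type*} {V : Type*} {S : Type*}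
    [MeasurableSpace S] (m' : MeasurableSpace Ω) {m0 : MeasurableSpace Ω}
    (Y : V → Ω → S) (P : Measure Ω) : Prop :=
  ∀ (s : Finset V) (g : V → S → ℝ), (∀ v, Measurable (g v)) →
    (∀ v, ∃ C, ∀ x, ‖g v x‖ ≤ C) →
    (P[fun ω => ∏ v ∈ s, g v (Y v ω)|m'])
      =ᵐ[P] fun ω => ∏ v ∈ s, (P[fun ω' => g v (Y v ω')|m']) ω


section General
variable {Ω : Type*} {m0 : MeasurableSpace Ω} {P : Measure Ω} [IsProbabilityMeasure P]
private lemma sf_trim' (m : MeasurableSpace Ω) (hm : m ≤ m0) : SigmaFinite (P.trim hm) := by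
  haveI := isFiniteMeasure_trim (μ := P) hm
  infer_instance

private lemma integrable_of_ae_bdd' {f : Ω → ℝ} (hf : AEStronglyMeasurable f P)
    {C : ℝ} (hC : ∀ᵐ ω ∂P, |f ω| ≤ C) : Integrable f P := by
  refine Integrable.mono' (integrable_const C) hf ?_
  filter_upwards [hC] with ω h using by simpa [Real.norm_eq_abs] using h

private lemma integral_condexp_mul' (m : MeasurableSpace Ω) (hm : m ≤ m0)
    {W f : Ω → ℝ} (hW : AEStronglyMeasurable[m] W P) {C : ℝ}
    (hWb : ∀ᵐ ω ∂P, ‖W ω‖ ≤ C) (hf : Integrable f P) :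
    ∫ ω, W ω * f ω ∂P = ∫ ω, W ω * (P[f|m]) ω ∂P := by
  haveI := sf_trim' (P := P) m hm
  have h := condExp_stronglyMeasurable_mul_of_bound₀ hm hW hf C hWb
  have hWae : AEStronglyMeasurable[m0] W P :=
    ((hW.stronglyMeasurable_mk.mono hm).aestronglyMeasurable).congr hW.ae_eq_mk.symm
  have hint : Integrable (W * f) P := hf.bdd_mul hWae hWb
  calc ∫ ω, W ω * f ω ∂P = ∫ ω, (W * f) ω ∂P := rfl
    _ = ∫ ω, (P[(W * f)|m]) ω ∂P := (integral_condExp hm).symm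
    _ = ∫ ω, (W * (P[f|m])) ω ∂P := integral_congr_ae h
    _ = ∫ ω, W ω * (P[f|m]) ω ∂P := rfl

private lemma map_integral_eq' {A : Type*} [MeasurableSpace A] {T T' : Ω → A}
    (hT : Measurable T) (hT' : Measurable T') (hlaw : P.map T = P.map T')
    (h : A → ℝ) (hh : Measurable h) : ∫ ω, h (T ω) ∂P = ∫ ω, h (T' ω) ∂P := by
  have e1 : ∫ p, h p ∂(P.map T) = ∫ ω, h (T ω) ∂P :=
    integral_map hT.aemeasurable hh.aestronglyMeasurable
  have e2 : ∫ p, h p ∂(P.map T') = ∫ ω, h (T' ω) ∂P :=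
    integral_map hT'.aemeasurable hh.aestronglyMeasurable
  rw [← e1, ← e2, hlaw]

/-- The key transfer inequality: if `(U,V)` has the same law as `(U',V')` and
`σ(V') ⊆ G`, then `‖E[g∘U | σ(V)]‖₂ ≤ ‖E[g∘U' | G]‖₂`. -/
private lemma transfer_sq_le {E : Type*} [MeasurableSpace E] [Countable E]
    [MeasurableSingletonClass E]
    {U U' : Ω → ℕ} (hU : Measurable U) (hU' : Measurable U')
    {V : Ω → E} {V' : Ω → E} (hV : Measurable V) (hV' : Measurable V')
    (hlaw : P.map (fun ω => (U ω, V ω)) = P.map (fun ω => (U' ω, V' ω)))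
    {G : MeasurableSpace Ω} (hVG : MeasurableSpace.comap V' inferInstance ≤ G) (hG : G ≤ m0)
    {g : ℕ → ℝ} {C : ℝ} (hgC : ∀ n, |g n| ≤ C) :
    ∫ ω, ((P[fun ω' => g (U ω')|MeasurableSpace.comap V inferInstance]) ω)^2 ∂P
      ≤ ∫ ω, ((P[fun ω' => g (U' ω')|G]) ω)^2 ∂P := by
  have hC0 : 0 ≤ C := le_trans (abs_nonneg _) (hgC 0)
  have hmV : MeasurableSpace.comap V inferInstance ≤ m0 := hV.comap_le
  haveI := sf_trim' (P := P) _ hmV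
  haveI := sf_trim' (P := P) G hG
  have hgmeas : Measurable g := measurable_of_countable g
  -- the conditional expectation and its factorization through V
  set c : Ω → ℝ := P[fun ω' => g (U ω')|MeasurableSpace.comap V inferInstance] with hc_def
  have hc_sm : StronglyMeasurable[MeasurableSpace.comap V inferInstance] c := stronglyMeasurable_condExp
  have hc_meas : Measurable[MeasurableSpace.comap V inferInstance] c := hc_sm.measurable
  have hfib : ∀ ω ω', V ω = V ω' → c ω = c ω' := by
    intro ω ω' hVeq
    have hs : MeasurableSet[MeasurableSpace.comap V inferInstance] (c ⁻¹' {c ω}) := hc_meas (measurableSet_singleton _)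
    obtain ⟨B, -, hB⟩ := hs
    have hω : ω ∈ V ⁻¹' B := by rw [hB]; exact rfl
    have hω' : ω' ∈ V ⁻¹' B := by
      simp only [Set.mem_preimage] at hω ⊢
      rwa [← hVeq]
    rw [hB] at hω'
    exact (hω' : c ω' = c ω).symm
  classical
  set ψ0 : E → ℝ := fun v => if h : ∃ ω, V ω = v then c h.choose else 0 with hψ0_def
  have hψ0V : ∀ ω, ψ0 (V ω) = c ω := by
    intro ω
    have h : ∃ ω', V ω' = V ω := ⟨ω, rfl⟩
    simp only [hψ0_def, dif_pos h]
    exact hfib _ _ h.choose_spec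
  set ψ : E → ℝ := fun v => max (min (ψ0 v) C) (-C) with hψ_def
  have hψm : Measurable ψ := measurable_of_countable ψ
  have hψbd : ∀ v, |ψ v| ≤ C := by
    intro v
    rw [abs_le]
    exact ⟨le_max_right _ _, max_le (min_le_right _ _) (by linarith)⟩
  -- c is a.e. bounded by C and hence a.e. equal to ψ ∘ V
  have hgUbd : ∀ᵐ ω ∂P, |g (U ω)| ≤ (C.toNNReal : ℝ) := by
    refine Filter.Eventually.of_forall fun ω => ?_
    rw [Real.coe_toNNReal C hC0]; exact hgC _
  have hcbd : ∀ᵐ ω ∂P, |c ω| ≤ C := by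
    filter_upwards [ae_bdd_condExp_of_ae_bdd (m := MeasurableSpace.comap V inferInstance) hgUbd] with ω h
    rwa [Real.coe_toNNReal C hC0] at h
  have hcψ : c =ᵐ[P] fun ω => ψ (V ω) := by
    filter_upwards [hcbd] with ω h
    rw [hψ_def]
    simp only [hψ0V ω]
    rw [abs_le] at h
    rw [min_eq_left h.2, max_eq_left h.1]
  -- integrable bounded functions
  have hgU_int : Integrable (fun ω => g (U ω)) P :=
    integrable_of_ae_bdd' ((hgmeas.comp hU).aestronglyMeasurable)
      (Filter.Eventually.of_forall fun ω => hgC _)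
  have hgU'_int : Integrable (fun ω => g (U' ω)) P :=
    integrable_of_ae_bdd' ((hgmeas.comp hU').aestronglyMeasurable)
      (Filter.Eventually.of_forall fun ω => hgC _)
  have hψV_sm : StronglyMeasurable[MeasurableSpace.comap V inferInstance] (fun ω => ψ (V ω)) :=
    (hψm.comp (Measurable.of_comap_le le_rfl)).stronglyMeasurable
  have hψV'_smG : StronglyMeasurable[G] (fun ω => ψ (V' ω)) := by
    have h1 : Measurable[MeasurableSpace.comap V' inferInstance] (fun ω => ψ (V' ω)) :=
      hψm.comp (Measurable.of_comap_le le_rfl)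
    exact (h1.mono hVG le_rfl).stronglyMeasurable
  set φ' : Ω → ℝ := P[fun ω' => g (U' ω')|G] with hφ'_def
  have hφ'm : Measurable[m0] φ' := (stronglyMeasurable_condExp.mono hG).measurable
  have hgU'bd : ∀ᵐ ω ∂P, |g (U' ω)| ≤ (C.toNNReal : ℝ) := by
    refine Filter.Eventually.of_forall fun ω => ?_
    rw [Real.coe_toNNReal C hC0]; exact hgC _
  have hφ'bd : ∀ᵐ ω ∂P, |φ' ω| ≤ C := by
    filter_upwards [ae_bdd_condExp_of_ae_bdd (m := G) hgU'bd] with ω h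
    rwa [Real.coe_toNNReal C hC0] at h
  -- transfer of integrals through the law identity
  have htrans : ∀ (h : ℕ × E → ℝ), Measurable h →
      ∫ ω, h (U ω, V ω) ∂P = ∫ ω, h (U' ω, V' ω) ∂P :=
    fun h hh => map_integral_eq' (hU.prodMk hV) (hU'.prodMk hV') hlaw h hh
  have hA1 : ∫ ω, ψ (V ω) * g (U ω) ∂P = ∫ ω, ψ (V' ω) * g (U' ω) ∂P :=
    htrans (fun p => ψ p.2 * g p.1)
      ((hψm.comp measurable_snd).mul (hgmeas.comp measurable_fst))
  have hA2 : ∫ ω, (ψ (V ω))^2 ∂P = ∫ ω, (ψ (V' ω))^2 ∂P :=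
    htrans (fun p => (ψ p.2)^2) ((hψm.comp measurable_snd).pow_const 2)
  -- pull-out properties
  have hPO1 : ∫ ω, ψ (V ω) * g (U ω) ∂P = ∫ ω, ψ (V ω) * c ω ∂P :=
    integral_condexp_mul' _ hmV hψV_sm.aestronglyMeasurable
      (Filter.Eventually.of_forall fun ω => by
        simpa [Real.norm_eq_abs] using hψbd (V ω)) hgU_int
  have hPO2 : ∫ ω, ψ (V' ω) * g (U' ω) ∂P = ∫ ω, ψ (V' ω) * φ' ω ∂P :=
    integral_condexp_mul' G hG hψV'_smG.aestronglyMeasurable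
      (Filter.Eventually.of_forall fun ω => by
        simpa [Real.norm_eq_abs] using hψbd (V' ω)) hgU'_int
  have hceq1 : ∫ ω, ψ (V ω) * c ω ∂P = ∫ ω, (c ω)^2 ∂P := by
    refine integral_congr_ae ?_
    filter_upwards [hcψ] with ω h
    rw [h]; ring
  have hceq2 : ∫ ω, (c ω)^2 ∂P = ∫ ω, (ψ (V ω))^2 ∂P := by
    refine integral_congr_ae ?_
    filter_upwards [hcψ] with ω h
    rw [h]
  have hαφ : ∫ ω, (c ω)^2 ∂P = ∫ ω, ψ (V' ω) * φ' ω ∂P := by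
    rw [← hceq1, ← hPO1, hA1, hPO2]
  have hαΨ : ∫ ω, (c ω)^2 ∂P = ∫ ω, (ψ (V' ω))^2 ∂P := by
    rw [hceq2, hA2]
  -- integrability of the quadratic terms
  have hΨm : Measurable[m0] (fun ω => ψ (V' ω)) := hψm.comp hV'
  have hint1 : Integrable (fun ω => (φ' ω)^2) P := by
    refine integrable_of_ae_bdd' ((hφ'm.pow_const 2).aestronglyMeasurable) (C := C^2) ?_
    filter_upwards [hφ'bd] with ω h
    rw [abs_pow]
    exact pow_le_pow_left₀ (abs_nonneg _) h 2
  have hint2 : Integrable (fun ω => ψ (V' ω) * φ' ω) P := by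
    refine integrable_of_ae_bdd' ((hΨm.mul hφ'm).aestronglyMeasurable) (C := C * C) ?_
    filter_upwards [hφ'bd] with ω h
    rw [abs_mul]
    exact mul_le_mul (hψbd _) h (abs_nonneg _) hC0
  have hint3 : Integrable (fun ω => (ψ (V' ω))^2) P := by
    refine integrable_of_ae_bdd' ((hΨm.pow_const 2).aestronglyMeasurable) (C := C^2) ?_
    refine Filter.Eventually.of_forall fun ω => ?_
    rw [abs_pow]
    exact pow_le_pow_left₀ (abs_nonneg _) (hψbd _) 2
  have hnn : 0 ≤ ∫ ω, (φ' ω - ψ (V' ω))^2 ∂P := integral_nonneg fun ω => sq_nonneg _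
  have hexpand : ∫ ω, (φ' ω - ψ (V' ω))^2 ∂P
      = ∫ ω, (φ' ω)^2 ∂P - 2 * (∫ ω, ψ (V' ω) * φ' ω ∂P) + ∫ ω, (ψ (V' ω))^2 ∂P := by
    have hpt : ∀ ω, (φ' ω - ψ (V' ω))^2
        = ((φ' ω)^2 - 2 * (ψ (V' ω) * φ' ω)) + (ψ (V' ω))^2 := fun ω => by ring
    simp_rw [hpt]
    have hint12 : Integrable (fun ω => (φ' ω)^2 - 2 * (ψ (V' ω) * φ' ω)) P :=
      hint1.sub (hint2.const_mul 2)
    rw [integral_add hint12 hint3, integral_sub hint1 (hint2.const_mul 2), MeasureTheory.integral_const_mul]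
  rw [hexpand, ← hαφ, ← hαΨ] at hnn
  linarith

end General


namespace ECI

/-- The `ℤ`-level involution swapping the positive window (minus `{a,b}`) with
deep negative indices. -/
def FZ (W a b z : ℤ) : ℤ :=
  if 0 < z ∧ z ≤ W ∧ z ≠ a ∧ z ≠ b then -(W + z)
  else if 0 < -z - W ∧ -z - W ≤ W ∧ -z - W ≠ a ∧ -z - W ≠ b then -z - W
  else z

lemma FZ_invol {W a b : ℤ} (hW : 0 ≤ W) : Function.Involutive (FZ W a b) := by
  intro z
  unfold FZ
  split_ifs <;> omega

lemma FZ_ne_zero {W a b z : ℤ} (hW : 0 ≤ W) (hz : z ≠ 0) : FZ W a b z ≠ 0 := by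
  unfold FZ; split_ifs <;> omega

lemma FZ_fix_a {W a b : ℤ} (ha : 0 < a) : FZ W a b a = a := by
  unfold FZ; split_ifs <;> omega

lemma FZ_fix_b {W a b : ℤ} (hb : 0 < b) : FZ W a b b = b := by
  unfold FZ; split_ifs <;> omega

lemma FZ_fix_neg_win {W a b z : ℤ} (h1 : -W ≤ z) (h2 : z < 0) : FZ W a b z = z := by
  unfold FZ; split_ifs <;> omega

lemma FZ_neg_of_pos_win {W a b z : ℤ} (h1 : 0 < z) (h2 : z ≤ W) (h3 : z ≠ a) (h4 : z ≠ b) :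
    FZ W a b z < 0 := by
  unfold FZ; split_ifs <;> omega

lemma FZ_support {W a b z : ℤ} (hW : 0 ≤ W) (h : FZ W a b z ≠ z) : -(2*W) ≤ z ∧ z ≤ W := by
  unfold FZ at h; split_ifs at h <;> omega

/-- The permutation of `NZ` induced by `FZ`. -/
def fNZ (W : ℕ) (a b : ℤ) (z : NZ) : NZ :=
  ⟨FZ W a b z.1, FZ_ne_zero (by positivity) z.2⟩

lemma fNZ_invol (W : ℕ) (a b : ℤ) : Function.Involutive (fNZ W a b) := fun z =>
  Subtype.ext (FZ_invol (by positivity) z.1)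

def tauP (W : ℕ) (a b : ℤ) : Equiv.Perm NZ := (fNZ_invol W a b).toPerm

lemma tauP_apply (W : ℕ) (a b : ℤ) (z : NZ) : tauP W a b z = fNZ W a b z := rfl

lemma tauP_finite (W : ℕ) (a b : ℤ) : {x : NZ | tauP W a b x ≠ x}.Finite := by
  have hsub : {x : NZ | tauP W a b x ≠ x} ⊆
      (fun x : NZ => x.1) ⁻¹' (Set.Icc (-(2*(W:ℤ))) (W:ℤ)) := by
    intro x hx
    have hx' : FZ W a b x.1 ≠ x.1 := by
      intro h; exact hx (Subtype.ext h)
    have := FZ_support (by positivity) hx'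
    exact ⟨this.1, this.2⟩
  exact Set.Finite.subset
    ((Set.finite_Icc _ _).preimage (Subtype.val_injective.injOn)) hsub




noncomputable def winF (W : ℕ) : Finset NZ := (Finset.Icc (-(W:ℤ)) (W:ℤ)).subtype (fun z => z ≠ 0)

lemma mem_winF {W : ℕ} {z : NZ} : z ∈ winF W ↔ (-(W:ℤ) ≤ z.1 ∧ z.1 ≤ W) := by
  simp [winF, Finset.mem_subtype, Finset.mem_Icc]

noncomputable def shellW (W : ℕ) : Finset (NZ × NZ) := (winF W ×ˢ winF W).filter (fun e => e.1.1 < 0)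

noncomputable def DW (F : Finset (NZ × NZ)) (W : ℕ) : Finset (NZ × NZ) := shellW W ∪ F

lemma winF_mono : Monotone winF := fun W W' h z hz => by
  rw [mem_winF] at hz ⊢
  have : (W:ℤ) ≤ (W':ℤ) := by exact_mod_cast h
  omega

lemma shellW_mono : Monotone shellW := fun W W' h =>
  Finset.filter_subset_filter _ (Finset.product_subset_product (winF_mono h) (winF_mono h))

lemma DW_mono (F : Finset (NZ × NZ)) : Monotone (DW F) := fun W W' h =>
  Finset.union_subset_union (shellW_mono h) (subset_refl F)

section Arrays
variable {Ω : Type*} {m0 : MeasurableSpace Ω}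
variable (X : NZ → NZ → Ω → ℕ)

def VD (D : Finset (NZ × NZ)) : Ω → (↥D → ℕ) := fun ω e => X e.1.1 e.1.2 ω

lemma VD_meas (hX : ∀ i j, Measurable (X i j)) (D : Finset (NZ × NZ)) :
    Measurable (VD X D) := measurable_pi_lambda _ fun e => hX _ _

def FIL (D : Finset (NZ × NZ)) : MeasurableSpace Ω :=
  MeasurableSpace.comap (VD X D) inferInstance

lemma FIL_mono {D D' : Finset (NZ × NZ)} (hsub : D ⊆ D') : FIL X D ≤ FIL X D' := by
  have hr : Measurable (fun (t : ↥D' → ℕ) (e : ↥D) => t ⟨e.1, hsub e.2⟩) :=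
    measurable_pi_lambda _ fun e => measurable_pi_apply _
  have hVD : VD X D = (fun (t : ↥D' → ℕ) (e : ↥D) => t ⟨e.1, hsub e.2⟩) ∘ VD X D' := rfl
  rw [FIL, hVD, ← MeasurableSpace.comap_comp]
  exact MeasurableSpace.comap_mono hr.comap_le

lemma entry_le_FIL {D : Finset (NZ × NZ)} {e : NZ × NZ} (he : e ∈ D) :
    MeasurableSpace.comap (fun ω => X e.1 e.2 ω) inferInstance ≤ FIL X D := by
  have h1 : (fun ω => X e.1 e.2 ω) = (fun t : ↥D → ℕ => t ⟨e, he⟩) ∘ VD X D := rfl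
  rw [h1, ← MeasurableSpace.comap_comp]
  exact MeasurableSpace.comap_mono (measurable_pi_apply _).comap_le

/-- The σ-algebra generated by the shell (entries with a negative first index). -/
def GG : MeasurableSpace Ω :=
  MeasurableSpace.comap (fun ω => fun p : NegZ × NZ => X (negToNZ p.1) p.2 ω) inferInstance

lemma GG_eq_iSup : GG X = ⨆ p : NegZ × NZ,
    MeasurableSpace.comap (fun ω => X (negToNZ p.1) p.2 ω) inferInstance := by
  show (⨆ p : NegZ × NZ,
      MeasurableSpace.comap (fun t : NegZ × NZ → ℕ => t p) inferInstance).comap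
      (fun ω => fun p : NegZ × NZ => X (negToNZ p.1) p.2 ω) = _
  rw [MeasurableSpace.comap_iSup]
  simp_rw [MeasurableSpace.comap_comp]
  rfl

lemma GG_le_m0 (hX : ∀ i j, Measurable (X i j)) : GG X ≤ m0 :=
  (measurable_pi_lambda _ fun p => hX _ _).comap_le

lemma shell_entry_le_GG {e : NZ × NZ} (he : e.1.1 < 0) :
    MeasurableSpace.comap (fun ω => X e.1 e.2 ω) inferInstance ≤ GG X := by
  rw [GG_eq_iSup]
  have : (fun ω => X e.1 e.2 ω) = fun ω => X (negToNZ (⟨e.1.1, he⟩ : NegZ)) ((⟨e.1.1, he⟩, e.2) : NegZ × NZ).2 ω := by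
    have : negToNZ (⟨e.1.1, he⟩ : NegZ) = e.1 := Subtype.ext rfl
    rw [this]
  rw [this]
  exact le_iSup (fun p : NegZ × NZ =>
    MeasurableSpace.comap (fun ω => X (negToNZ p.1) p.2 ω) inferInstance) (⟨e.1.1, he⟩, e.2)

lemma GG_le_sup (F : Finset (NZ × NZ)) : GG X ≤ ⨆ W, FIL X (DW F W) := by
  rw [GG_eq_iSup]
  refine iSup_le fun p => ?_
  set W : ℕ := p.1.1.natAbs ⊔ p.2.1.natAbs with hW
  have hmem : ((negToNZ p.1, p.2) : NZ × NZ) ∈ DW F W := by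
    refine Finset.mem_union_left _ ?_
    refine Finset.mem_filter.2 ⟨Finset.mem_product.2 ⟨?_, ?_⟩, p.1.2⟩
    · rw [mem_winF]
      have h1 : p.1.1.natAbs ≤ W := le_max_left _ _
      have he1 : ((negToNZ p.1, p.2) : NZ × NZ).1.1 = p.1.1 := rfl
      rw [he1]; omega
    · rw [mem_winF]
      have h2 : p.2.1.natAbs ≤ W := le_max_right _ _
      have he2 : ((negToNZ p.1, p.2) : NZ × NZ).2.1 = p.2.1 := rfl
      rw [he2]; omega
  have heq : (fun ω => X (negToNZ p.1) p.2 ω)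
      = (fun ω => X ((negToNZ p.1, p.2) : NZ × NZ).1 ((negToNZ p.1, p.2) : NZ × NZ).2 ω) := rfl
  rw [heq]
  exact le_trans (entry_le_FIL X hmem) (le_iSup (fun W => FIL X (DW F W)) W)

lemma F_entry_le_sup (F : Finset (NZ × NZ)) {e : NZ × NZ} (he : e ∈ F) :
    MeasurableSpace.comap (fun ω => X e.1 e.2 ω) inferInstance ≤ ⨆ W, FIL X (DW F W) :=
  le_trans (entry_le_FIL X (Finset.mem_union_right _ he)) (le_iSup (fun W => FIL X (DW F W)) 0)

/-- Normalized image of an entry under the swap: an entry of the shell. -/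
def img (W : ℕ) (a b : ℤ) (e : NZ × NZ) : NegZ × NZ :=
  if h : (fNZ W a b e.1).1 < 0 then (⟨(fNZ W a b e.1).1, h⟩, fNZ W a b e.2)
  else if h2 : (fNZ W a b e.2).1 < 0 then (⟨(fNZ W a b e.2).1, h2⟩, fNZ W a b e.1)
  else (⟨-1, by norm_num⟩, fNZ W a b e.2)

variable {q : NZ × NZ} {F : Finset (NZ × NZ)} {W : ℕ}

lemma neg_coord (hq1 : 0 < q.1.1) (hq2 : 0 < q.2.1)
    (hFpos : ∀ e ∈ F, 0 < e.1.1 ∧ 0 < e.2.1)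
    (hFq : ∀ e ∈ F, ¬(e.1 ∈ ({q.1, q.2} : Set NZ) ∧ e.2 ∈ ({q.1, q.2} : Set NZ)))
    (hFW : ∀ e ∈ F, e.1.1 ≤ (W:ℤ) ∧ e.2.1 ≤ (W:ℤ))
    {e : NZ × NZ} (he : e ∈ DW F W) :
    (fNZ W q.1.1 q.2.1 e.1).1 < 0 ∨ (fNZ W q.1.1 q.2.1 e.2).1 < 0 := by
  rcases Finset.mem_union.1 he with h | h
  · left
    obtain ⟨hp, hneg⟩ := Finset.mem_filter.1 h
    have h1 := mem_winF.1 (Finset.mem_product.1 hp).1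
    have hfix : fNZ W q.1.1 q.2.1 e.1 = e.1 := Subtype.ext (FZ_fix_neg_win h1.1 hneg)
    rw [hfix]; exact hneg
  · by_cases h1 : e.1 ≠ q.1 ∧ e.1 ≠ q.2
    · left
      exact FZ_neg_of_pos_win (hFpos e h).1 (hFW e h).1
        (fun hh => h1.1 (Subtype.ext hh)) (fun hh => h1.2 (Subtype.ext hh))
    · right
      have he1 : e.1 ∈ ({q.1, q.2} : Set NZ) := by
        push_neg at h1
        by_cases hh : e.1 = q.1
        · exact Set.mem_insert_iff.2 (Or.inl hh)
        · exact Set.mem_insert_iff.2 (Or.inr (h1 hh))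
      have he2 : e.2 ∉ ({q.1, q.2} : Set NZ) := fun hh => hFq e h ⟨he1, hh⟩
      simp only [Set.mem_insert_iff, Set.mem_singleton_iff, not_or] at he2
      exact FZ_neg_of_pos_win (hFpos e h).2 (hFW e h).2
        (fun hh => he2.1 (Subtype.ext hh)) (fun hh => he2.2 (Subtype.ext hh))

lemma X_img_eq {a b : ℤ} {ω : Ω} (hω : ∀ i j, X i j ω = X j i ω) {e : NZ × NZ}
    (hneg : (fNZ W a b e.1).1 < 0 ∨ (fNZ W a b e.2).1 < 0) :
    X (fNZ W a b e.1) (fNZ W a b e.2) ω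
      = X (negToNZ (img W a b e).1) (img W a b e).2 ω := by
  unfold img
  split_ifs with h h2
  · have h3 : negToNZ (⟨(fNZ W a b e.1).1, h⟩ : NegZ) = fNZ W a b e.1 := Subtype.ext rfl
    rw [h3]
  · have h3 : negToNZ (⟨(fNZ W a b e.2).1, h2⟩ : NegZ) = fNZ W a b e.2 := Subtype.ext rfl
    rw [h3]; exact hω _ _
  · tauto

lemma law_eq (P : Measure Ω) [IsProbabilityMeasure P]
    (hXmeas : ∀ i j, Measurable (X i j))
    (hsymm : ∀ᵐ ω ∂P, ∀ i j, X i j ω = X j i ω)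
    (hexch : ∀ τ : Equiv.Perm NZ, {x | τ x ≠ x}.Finite →
      Measure.map (fun ω => fun p : NZ × NZ => X (τ p.1) (τ p.2) ω) P =
        Measure.map (fun ω => fun p : NZ × NZ => X p.1 p.2 ω) P)
    (hq1 : 0 < q.1.1) (hq2 : 0 < q.2.1)
    (hFpos : ∀ e ∈ F, 0 < e.1.1 ∧ 0 < e.2.1)
    (hFq : ∀ e ∈ F, ¬(e.1 ∈ ({q.1, q.2} : Set NZ) ∧ e.2 ∈ ({q.1, q.2} : Set NZ)))
    (hFW : ∀ e ∈ F, e.1.1 ≤ (W:ℤ) ∧ e.2.1 ≤ (W:ℤ)) :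
    P.map (fun ω => (X q.1 q.2 ω, VD X (DW F W) ω))
      = P.map (fun ω => (X q.1 q.2 ω, fun e : ↥(DW F W) =>
          X (negToNZ (img W q.1.1 q.2.1 e.1).1) (img W q.1.1 q.2.1 e.1).2 ω)) := by
  have h1 := hexch (tauP W q.1.1 q.2.1) (tauP_finite W q.1.1 q.2.1)
  have hmA : Measurable (fun ω => fun p : NZ × NZ =>
      X (tauP W q.1.1 q.2.1 p.1) (tauP W q.1.1 q.2.1 p.2) ω) :=
    measurable_pi_lambda _ fun p => hXmeas _ _
  have hmB : Measurable (fun ω => fun p : NZ × NZ => X p.1 p.2 ω) :=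
    measurable_pi_lambda _ fun p => hXmeas _ _
  have hΦ : Measurable (fun t : NZ × NZ → ℕ => (t q, fun e : ↥(DW F W) => t e.1)) :=
    (measurable_pi_apply q).prodMk (measurable_pi_lambda _ fun e => measurable_pi_apply _)
  have h2 := congrArg
    (Measure.map (fun t : NZ × NZ → ℕ => (t q, fun e : ↥(DW F W) => t e.1))) h1
  rw [Measure.map_map hΦ hmA, Measure.map_map hΦ hmB] at h2
  have hq1' : tauP W q.1.1 q.2.1 q.1 = q.1 := Subtype.ext (FZ_fix_a hq1)
  have hq2' : tauP W q.1.1 q.2.1 q.2 = q.2 := Subtype.ext (FZ_fix_b hq2)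
  have hcompA : ((fun t : NZ × NZ → ℕ => (t q, fun e : ↥(DW F W) => t e.1))
        ∘ (fun ω => fun p : NZ × NZ =>
          X (tauP W q.1.1 q.2.1 p.1) (tauP W q.1.1 q.2.1 p.2) ω))
      = fun ω => (X q.1 q.2 ω, fun e : ↥(DW F W) =>
          X (tauP W q.1.1 q.2.1 e.1.1) (tauP W q.1.1 q.2.1 e.1.2) ω) := by
    funext ω
    dsimp only [Function.comp_apply]
    rw [hq1', hq2']
  have hcompB : ((fun t : NZ × NZ → ℕ => (t q, fun e : ↥(DW F W) => t e.1))
        ∘ (fun ω => fun p : NZ × NZ => X p.1 p.2 ω))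
      = fun ω => (X q.1 q.2 ω, VD X (DW F W) ω) := rfl
  rw [hcompA, hcompB] at h2
  rw [← h2]
  refine Measure.map_congr ?_
  filter_upwards [hsymm] with ω hω
  have hvec : (fun e : ↥(DW F W) =>
      X (tauP W q.1.1 q.2.1 e.1.1) (tauP W q.1.1 q.2.1 e.1.2) ω)
      = fun e : ↥(DW F W) =>
        X (negToNZ (img W q.1.1 q.2.1 e.1).1) (img W q.1.1 q.2.1 e.1).2 ω := by
    funext e
    exact X_img_eq X hω (neg_coord hq1 hq2 hFpos hFq hFW e.2)
  rw [hvec]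

lemma key (P : Measure Ω) [IsProbabilityMeasure P]
    (hXmeas : ∀ i j, Measurable (X i j))
    (hsymm : ∀ᵐ ω ∂P, ∀ i j, X i j ω = X j i ω)
    (hexch : ∀ τ : Equiv.Perm NZ, {x | τ x ≠ x}.Finite →
      Measure.map (fun ω => fun p : NZ × NZ => X (τ p.1) (τ p.2) ω) P =
        Measure.map (fun ω => fun p : NZ × NZ => X p.1 p.2 ω) P)
    (hq1 : 0 < q.1.1) (hq2 : 0 < q.2.1)
    (hFpos : ∀ e ∈ F, 0 < e.1.1 ∧ 0 < e.2.1)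
    (hFq : ∀ e ∈ F, ¬(e.1 ∈ ({q.1, q.2} : Set NZ) ∧ e.2 ∈ ({q.1, q.2} : Set NZ)))
    (g : ℕ → ℝ) (C : ℝ) (hgC : ∀ n, |g n| ≤ C) :
    P[(fun ω => g (X q.1 q.2 ω)) | ⨆ W, FIL X (DW F W)]
      =ᵐ[P] P[(fun ω => g (X q.1 q.2 ω)) | GG X] := by
  classical
  have hC0 : 0 ≤ C := le_trans (abs_nonneg _) (hgC 0)
  have hGm0 : GG X ≤ m0 := GG_le_m0 X hXmeas
  have hAle : (⨆ W, FIL X (DW F W)) ≤ m0 := iSup_le fun W => (VD_meas X hXmeas _).comap_le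
  haveI := sf_trim' (P := P) _ hGm0
  haveI := sf_trim' (P := P) _ hAle
  set gU : Ω → ℝ := fun ω => g (X q.1 q.2 ω) with hgU_def
  have hgUm : Measurable gU := (measurable_of_countable g).comp (hXmeas _ _)
  -- a.e. bounds for all conditional expectations
  have hbd : ∀ (m : MeasurableSpace Ω), ∀ᵐ ω ∂P, |(P[gU|m]) ω| ≤ C := by
    intro m
    have h1 : ∀ᵐ ω ∂P, |gU ω| ≤ (C.toNNReal : ℝ) := by
      refine Filter.Eventually.of_forall fun ω => ?_
      rw [Real.coe_toNNReal C hC0]; exact hgC _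
    filter_upwards [ae_bdd_condExp_of_ae_bdd (m := m) h1] with ω h
    rwa [Real.coe_toNNReal C hC0] at h
  -- the filtration of finite windows
  set ℱ : Filtration ℕ m0 := ⟨fun W => FIL X (DW F W),
    fun _ _ h => FIL_mono X (DW_mono F h), fun W => (VD_meas X hXmeas _).comap_le⟩ with hℱ
  set W0 : ℕ := F.sup (fun e => e.1.1.natAbs ⊔ e.2.1.natAbs) with hW0
  have hFW : ∀ W, W0 ≤ W → ∀ e ∈ F, e.1.1 ≤ (W:ℤ) ∧ e.2.1 ≤ (W:ℤ) := by
    intro W hW e he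
    have hle := Finset.le_sup (f := fun e : NZ × NZ => e.1.1.natAbs ⊔ e.2.1.natAbs) he
    have h1 : e.1.1.natAbs ≤ W := le_trans (le_trans (le_max_left _ _) hle) hW
    have h2 : e.2.1.natAbs ≤ W := le_trans (le_trans (le_max_right _ _) hle) hW
    omega
  -- per-window norm inequality via the exchangeability transfer
  have hineq : ∀ W, W0 ≤ W →
      ∫ ω, ((P[gU|ℱ W]) ω)^2 ∂P ≤ ∫ ω, ((P[gU|GG X]) ω)^2 ∂P := by
    intro W hW
    have hlaw := law_eq X P hXmeas hsymm hexch hq1 hq2 hFpos hFq (hFW W hW)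
    have hV'm : Measurable (fun ω => fun e : ↥(DW F W) =>
        X (negToNZ (img W q.1.1 q.2.1 e.1).1) (img W q.1.1 q.2.1 e.1).2 ω) :=
      measurable_pi_lambda _ fun e => hXmeas _ _
    have hV'G : MeasurableSpace.comap (fun ω => fun e : ↥(DW F W) =>
        X (negToNZ (img W q.1.1 q.2.1 e.1).1) (img W q.1.1 q.2.1 e.1).2 ω)
        inferInstance ≤ GG X := by
      have hr : Measurable (fun t : NegZ × NZ → ℕ =>
          fun e : ↥(DW F W) => t (img W q.1.1 q.2.1 e.1)) :=
        measurable_pi_lambda _ fun e => measurable_pi_apply _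
      have hfac : (fun ω => fun e : ↥(DW F W) =>
          X (negToNZ (img W q.1.1 q.2.1 e.1).1) (img W q.1.1 q.2.1 e.1).2 ω)
          = (fun t : NegZ × NZ → ℕ => fun e : ↥(DW F W) => t (img W q.1.1 q.2.1 e.1))
            ∘ (fun ω => fun p : NegZ × NZ => X (negToNZ p.1) p.2 ω) := rfl
      rw [hfac, ← MeasurableSpace.comap_comp]
      exact MeasurableSpace.comap_mono hr.comap_le
    exact transfer_sq_le (hXmeas q.1 q.2) (hXmeas q.1 q.2)
      (VD_meas X hXmeas (DW F W)) hV'm hlaw hV'G hGm0 hgC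
  -- Lévy's upward theorem and dominated convergence
  have hlevy := tendsto_ae_condExp (μ := P) (ℱ := ℱ) gU
  have hconv : Filter.Tendsto (fun W => ∫ ω, ((P[gU|ℱ W]) ω)^2 ∂P) Filter.atTop
      (nhds (∫ ω, ((P[gU|⨆ W, ℱ W]) ω)^2 ∂P)) := by
    refine tendsto_integral_of_dominated_convergence (fun _ => C^2) ?_ (integrable_const _) ?_ ?_
    · intro n
      exact ((stronglyMeasurable_condExp.mono (ℱ.le n)).measurable.pow_const 2).aestronglyMeasurable
    · intro n
      filter_upwards [hbd (ℱ n)] with ω h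
      have h2 : |(P[gU|ℱ n]) ω ^ 2| ≤ C^2 := by
        rw [abs_pow]; exact pow_le_pow_left₀ (abs_nonneg _) h 2
      simpa [Real.norm_eq_abs] using h2
    · filter_upwards [hlevy] with ω h
      exact h.pow 2
  have hγβ : ∫ ω, ((P[gU|⨆ W, ℱ W]) ω)^2 ∂P ≤ ∫ ω, ((P[gU|GG X]) ω)^2 ∂P :=
    le_of_tendsto hconv (Filter.eventually_atTop.2 ⟨W0, hineq⟩)
  -- Pythagoras: the L²-norm comparison forces equality
  have hGA : GG X ≤ ⨆ W, FIL X (DW F W) := GG_le_sup X F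
  have hsup_eq : (⨆ W, ℱ W) = ⨆ W, FIL X (DW F W) := rfl
  set cinf : Ω → ℝ := P[gU|⨆ W, ℱ W] with hcinf
  set φ : Ω → ℝ := P[gU|GG X] with hφ
  have hφc : P[cinf|GG X] =ᵐ[P] φ := condExp_condExp_of_le hGA hAle
  have hstep : ∫ ω, φ ω * cinf ω ∂P = ∫ ω, φ ω * φ ω ∂P := by
    have h1 : ∫ ω, φ ω * cinf ω ∂P = ∫ ω, φ ω * (P[cinf|GG X]) ω ∂P :=
      integral_condexp_mul' _ hGm0 (stronglyMeasurable_condExp.aestronglyMeasurable)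
        (C := C) (by filter_upwards [hbd (GG X)] with ω h
                     simpa [Real.norm_eq_abs] using h)
        integrable_condExp
    rw [h1]
    refine integral_congr_ae ?_
    filter_upwards [hφc] with ω h
    rw [h]
  have hφm : Measurable[m0] φ := (stronglyMeasurable_condExp.mono hGm0).measurable
  have hcm : Measurable[m0] cinf := (stronglyMeasurable_condExp.mono hAle).measurable
  have hφbd : ∀ᵐ ω ∂P, |φ ω| ≤ C := hbd _
  have hcbd : ∀ᵐ ω ∂P, |cinf ω| ≤ C := hbd _
  have hint1 : Integrable (fun ω => (cinf ω)^2) P := by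
    refine integrable_of_ae_bdd' ((hcm.pow_const 2).aestronglyMeasurable) (C := C^2) ?_
    filter_upwards [hcbd] with ω h
    rw [abs_pow]; exact pow_le_pow_left₀ (abs_nonneg _) h 2
  have hint2 : Integrable (fun ω => φ ω * cinf ω) P := by
    refine integrable_of_ae_bdd' ((hφm.mul hcm).aestronglyMeasurable) (C := C*C) ?_
    filter_upwards [hφbd, hcbd] with ω h h'
    rw [abs_mul]; exact mul_le_mul h h' (abs_nonneg _) hC0
  have hint3 : Integrable (fun ω => (φ ω)^2) P := by
    refine integrable_of_ae_bdd' ((hφm.pow_const 2).aestronglyMeasurable) (C := C^2) ?_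
    filter_upwards [hφbd] with ω h
    rw [abs_pow]; exact pow_le_pow_left₀ (abs_nonneg _) h 2
  have hdiff_int : Integrable (fun ω => (cinf ω - φ ω)^2) P := by
    refine integrable_of_ae_bdd' (((hcm.sub hφm).pow_const 2).aestronglyMeasurable)
      (C := (2*C)^2) ?_
    filter_upwards [hφbd, hcbd] with ω h h'
    rw [abs_pow]
    refine pow_le_pow_left₀ (abs_nonneg _) ?_ 2
    calc |cinf ω - φ ω| ≤ |cinf ω| + |φ ω| := abs_sub _ _
      _ ≤ 2*C := by linarith
  have hexpand : ∫ ω, (cinf ω - φ ω)^2 ∂P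
      = ∫ ω, (cinf ω)^2 ∂P - 2 * (∫ ω, φ ω * cinf ω ∂P) + ∫ ω, (φ ω)^2 ∂P := by
    have hpt : ∀ ω, (cinf ω - φ ω)^2
        = ((cinf ω)^2 - 2 * (φ ω * cinf ω)) + (φ ω)^2 := fun ω => by ring
    simp_rw [hpt]
    have hint12 : Integrable (fun ω => (cinf ω)^2 - 2 * (φ ω * cinf ω)) P :=
      hint1.sub (hint2.const_mul 2)
    rw [integral_add hint12 hint3, integral_sub hint1 (hint2.const_mul 2),
      MeasureTheory.integral_const_mul]
  have hφφ : ∫ ω, φ ω * φ ω ∂P = ∫ ω, (φ ω)^2 ∂P := by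
    refine integral_congr_ae (Filter.Eventually.of_forall fun ω => ?_)
    ring
  have hzero : ∫ ω, (cinf ω - φ ω)^2 ∂P = 0 := by
    have hle : ∫ ω, (cinf ω - φ ω)^2 ∂P ≤ 0 := by
      rw [hexpand, hstep, hφφ]
      linarith [hγβ]
    exact le_antisymm hle (integral_nonneg fun ω => sq_nonneg _)
  have hae := (integral_eq_zero_iff_of_nonneg (fun ω => sq_nonneg _) hdiff_int).1 hzero
  have : cinf =ᵐ[P] φ := by
    filter_upwards [hae] with ω h
    have h2 : (cinf ω - φ ω)^2 = 0 := h
    have h3 : cinf ω - φ ω = 0 := by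
      exact pow_eq_zero_iff (two_ne_zero) |>.1 h2
    linarith [h3]
  exact this

lemma exists_good (s : Finset (NZ × NZ)) (hne : s.Nonempty)
    (hnorm : ∀ e ∈ s, e.1.1 ≤ e.2.1) :
    ∃ q₀ ∈ s, ∀ e ∈ s.erase q₀,
      ¬(e.1 ∈ ({q₀.1, q₀.2} : Set NZ) ∧ e.2 ∈ ({q₀.1, q₀.2} : Set NZ)) := by
  classical
  by_cases hdiag : (s.filter (fun e => e.1 = e.2)).Nonempty
  · obtain ⟨q₀, hq₀⟩ := hdiag
    obtain ⟨hq₀s, hq₀d⟩ := Finset.mem_filter.1 hq₀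
    refine ⟨q₀, hq₀s, ?_⟩
    rintro e he ⟨h1, h2⟩
    simp only [Set.mem_insert_iff, Set.mem_singleton_iff, ← hq₀d, or_self] at h1 h2
    exact (Finset.ne_of_mem_erase he) (Prod.ext h1 (h2.trans hq₀d))
  · have hnod : ∀ e ∈ s, e.1 ≠ e.2 := fun e he hd =>
      hdiag ⟨e, Finset.mem_filter.2 ⟨he, hd⟩⟩
    obtain ⟨q₀, hq₀s⟩ := hne
    refine ⟨q₀, hq₀s, ?_⟩
    rintro e he ⟨h1, h2⟩
    have hes := Finset.mem_of_mem_erase he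
    have hene := Finset.ne_of_mem_erase he
    have h1' : e.1 = q₀.1 ∨ e.1 = q₀.2 := by
      simpa [Set.mem_insert_iff] using h1
    have h2' : e.2 = q₀.1 ∨ e.2 = q₀.2 := by
      simpa [Set.mem_insert_iff] using h2
    have hq₀lt : q₀.1.1 < q₀.2.1 :=
      lt_of_le_of_ne (hnorm q₀ hq₀s) (fun hh => hnod q₀ hq₀s (Subtype.ext hh))
    have helt : e.1.1 < e.2.1 :=
      lt_of_le_of_ne (hnorm e hes) (fun hh => hnod e hes (Subtype.ext hh))
    rcases h1' with h1' | h1' <;> rcases h2' with h2' | h2'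
    · rw [h1', h2'] at helt; omega
    · exact hene (Prod.ext h1' h2')
    · rw [h1', h2'] at helt; omega
    · rw [h1', h2'] at helt; omega

lemma prod_formula (P : Measure Ω) [IsProbabilityMeasure P]
    (hXmeas : ∀ i j, Measurable (X i j))
    (hsymm : ∀ᵐ ω ∂P, ∀ i j, X i j ω = X j i ω)
    (hexch : ∀ τ : Equiv.Perm NZ, {x | τ x ≠ x}.Finite →
      Measure.map (fun ω => fun p : NZ × NZ => X (τ p.1) (τ p.2) ω) P =
        Measure.map (fun ω => fun p : NZ × NZ => X p.1 p.2 ω) P)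
    (g : NZ × NZ → ℕ → ℝ) (C : NZ × NZ → ℝ) (hgC : ∀ e x, |g e x| ≤ C e) :
    ∀ (n : ℕ) (s : Finset (NZ × NZ)), s.card = n →
      (∀ e ∈ s, 0 < e.1.1 ∧ 0 < e.2.1) → (∀ e ∈ s, e.1.1 ≤ e.2.1) →
      ∀ (Z : Ω → ℝ) (CZ : ℝ), Measurable[GG X] Z → (∀ᵐ ω ∂P, |Z ω| ≤ CZ) →
      ∫ ω, (∏ e ∈ s, g e (X e.1 e.2 ω)) * Z ω ∂P
        = ∫ ω, (∏ e ∈ s, (P[fun ω' => g e (X e.1 e.2 ω')|GG X]) ω) * Z ω ∂P := by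
  classical
  have hGm0 : GG X ≤ m0 := GG_le_m0 X hXmeas
  haveI := sf_trim' (P := P) _ hGm0
  intro n
  induction n with
  | zero =>
    intro s hcard _ _ Z CZ hZm hZbd
    rw [Finset.card_eq_zero.1 hcard]
    simp
  | succ n ih =>
    intro s hcard hpos hnorm Z CZ hZm hZbd
    have hne : s.Nonempty := Finset.card_pos.1 (by omega)
    obtain ⟨q₀, hq₀s, hFq⟩ := exists_good s hne hnorm
    set F : Finset (NZ × NZ) := s.erase q₀ with hF
    have hFcard : F.card = n := by rw [hF, Finset.card_erase_of_mem hq₀s]; omega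
    have hFpos : ∀ e ∈ F, 0 < e.1.1 ∧ 0 < e.2.1 := fun e he =>
      hpos e (Finset.mem_of_mem_erase he)
    have hFnorm : ∀ e ∈ F, e.1.1 ≤ e.2.1 := fun e he =>
      hnorm e (Finset.mem_of_mem_erase he)
    have hq1 : 0 < q₀.1.1 := (hpos q₀ hq₀s).1
    have hq2 : 0 < q₀.2.1 := (hpos q₀ hq₀s).2
    -- the big σ-algebra
    set A : MeasurableSpace Ω := ⨆ W, FIL X (DW F W) with hA
    have hAle : A ≤ m0 := iSup_le fun W => (VD_meas X hXmeas _).comap_le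
    haveI := sf_trim' (P := P) _ hAle
    have hGA : GG X ≤ A := GG_le_sup X F
    -- nonnegativity of the bounds
    have hC0 : ∀ e, 0 ≤ C e := fun e => le_trans (abs_nonneg _) (hgC e 0)
    -- measurability of the product over F with respect to A
    have hXA : ∀ e ∈ F, Measurable[A] (fun ω => X e.1 e.2 ω) := fun e he =>
      Measurable.of_comap_le (le_trans (entry_le_FIL X (Finset.mem_union_right _ he))
        (le_iSup (fun W => FIL X (DW F W)) 0))
    have hHm : Measurable[A] (fun ω => ∏ e ∈ F, g e (X e.1 e.2 ω)) :=
      Finset.measurable_prod _ fun e he =>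
        (measurable_of_countable (g e)).comp (hXA e he)
    have hZmA : Measurable[A] Z := hZm.mono hGA le_rfl
    have hHbd : ∀ ω, |∏ e ∈ F, g e (X e.1 e.2 ω)| ≤ ∏ e ∈ F, C e := by
      intro ω
      rw [Finset.abs_prod]
      exact Finset.prod_le_prod (fun e _ => abs_nonneg _) (fun e _ => hgC e _)
    -- the conditional expectations
    set φ₀ : Ω → ℝ := P[fun ω' => g q₀ (X q₀.1 q₀.2 ω')|GG X] with hφ₀
    have hφ₀m : Measurable[GG X] φ₀ := stronglyMeasurable_condExp.measurable
    have hφ₀bd : ∀ᵐ ω ∂P, |φ₀ ω| ≤ C q₀ := by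
      have h1 : ∀ᵐ ω ∂P, |g q₀ (X q₀.1 q₀.2 ω)| ≤ ((C q₀).toNNReal : ℝ) := by
        refine Filter.Eventually.of_forall fun ω => ?_
        rw [Real.coe_toNNReal _ (hC0 q₀)]; exact hgC _ _
      filter_upwards [ae_bdd_condExp_of_ae_bdd (m := GG X) h1] with ω h
      rwa [Real.coe_toNNReal _ (hC0 q₀)] at h
    -- step 1: peel off q₀ via the key lemma
    have hgq₀_int : Integrable (fun ω => g q₀ (X q₀.1 q₀.2 ω)) P :=
      integrable_of_ae_bdd' (((measurable_of_countable (g q₀)).comp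
        (hXmeas _ _)).aestronglyMeasurable)
        (Filter.Eventually.of_forall fun ω => hgC _ _)
    have hHZ_sm : AEStronglyMeasurable[A] (fun ω => (∏ e ∈ F, g e (X e.1 e.2 ω)) * Z ω) P :=
      ((hHm.mul hZmA).stronglyMeasurable).aestronglyMeasurable
    have hHZbd : ∀ᵐ ω ∂P, ‖(∏ e ∈ F, g e (X e.1 e.2 ω)) * Z ω‖ ≤ (∏ e ∈ F, C e) * CZ := by
      filter_upwards [hZbd] with ω h
      rw [Real.norm_eq_abs, abs_mul]
      exact mul_le_mul (hHbd ω) h (abs_nonneg _) (Finset.prod_nonneg fun e _ => hC0 e)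
    have hkey := key X P hXmeas hsymm hexch hq1 hq2 hFpos hFq (g q₀) (C q₀) (hgC q₀)
    have hstep1 : ∫ ω, (∏ e ∈ s, g e (X e.1 e.2 ω)) * Z ω ∂P
        = ∫ ω, (∏ e ∈ F, g e (X e.1 e.2 ω)) * (φ₀ ω * Z ω) ∂P := by
      have e1 : ∫ ω, (∏ e ∈ s, g e (X e.1 e.2 ω)) * Z ω ∂P
          = ∫ ω, ((∏ e ∈ F, g e (X e.1 e.2 ω)) * Z ω) * (g q₀ (X q₀.1 q₀.2 ω)) ∂P := by
        refine integral_congr_ae (Filter.Eventually.of_forall fun ω => ?_)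
        dsimp only
        rw [← Finset.mul_prod_erase s (fun e => g e (X e.1 e.2 ω)) hq₀s, ← hF]
        ring
      have e2 := integral_condexp_mul' (P := P) A hAle hHZ_sm hHZbd hgq₀_int
      have e3 : ∫ ω, ((∏ e ∈ F, g e (X e.1 e.2 ω)) * Z ω)
            * (P[fun ω' => g q₀ (X q₀.1 q₀.2 ω')|A]) ω ∂P
          = ∫ ω, ((∏ e ∈ F, g e (X e.1 e.2 ω)) * Z ω) * φ₀ ω ∂P := by
        refine integral_congr_ae ?_
        filter_upwards [hkey] with ω h
        rw [h]
      rw [e1, e2, e3]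
      refine integral_congr_ae (Filter.Eventually.of_forall fun ω => ?_)
      ring
    -- step 2: induction hypothesis with the new weight φ₀ * Z
    have hstep2 : ∫ ω, (∏ e ∈ F, g e (X e.1 e.2 ω)) * (φ₀ ω * Z ω) ∂P
        = ∫ ω, (∏ e ∈ F, (P[fun ω' => g e (X e.1 e.2 ω')|GG X]) ω) * (φ₀ ω * Z ω) ∂P := by
      refine ih F hFcard hFpos hFnorm (fun ω => φ₀ ω * Z ω) (C q₀ * CZ)
        (hφ₀m.mul hZm) ?_
      filter_upwards [hφ₀bd, hZbd] with ω h1 h2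
      rw [abs_mul]
      exact mul_le_mul h1 h2 (abs_nonneg _) (hC0 q₀)
    rw [hstep1, hstep2]
    refine integral_congr_ae (Filter.Eventually.of_forall fun ω => ?_)
    dsimp only
    have h9 : ∏ e ∈ s, (P[fun ω' => g e (X e.1 e.2 ω')|GG X]) ω
        = φ₀ ω * ∏ e ∈ F, (P[fun ω' => g e (X e.1 e.2 ω')|GG X]) ω := by
      rw [hF]
      exact (Finset.mul_prod_erase s _ hq₀s).symm
    rw [h9]
    ring

lemma condexp_prod (P : Measure Ω) [IsProbabilityMeasure P]
    (hXmeas : ∀ i j, Measurable (X i j))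
    (hsymm : ∀ᵐ ω ∂P, ∀ i j, X i j ω = X j i ω)
    (hexch : ∀ τ : Equiv.Perm NZ, {x | τ x ≠ x}.Finite →
      Measure.map (fun ω => fun p : NZ × NZ => X (τ p.1) (τ p.2) ω) P =
        Measure.map (fun ω => fun p : NZ × NZ => X p.1 p.2 ω) P)
    (g : NZ × NZ → ℕ → ℝ) (C : NZ × NZ → ℝ) (hgC : ∀ e x, |g e x| ≤ C e)
    (s : Finset (NZ × NZ))
    (hpos : ∀ e ∈ s, 0 < e.1.1 ∧ 0 < e.2.1) (hnorm : ∀ e ∈ s, e.1.1 ≤ e.2.1) :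
    P[(fun ω => ∏ e ∈ s, g e (X e.1 e.2 ω))|GG X]
      =ᵐ[P] fun ω => ∏ e ∈ s, (P[fun ω' => g e (X e.1 e.2 ω')|GG X]) ω := by
  classical
  have hGm0 : GG X ≤ m0 := GG_le_m0 X hXmeas
  haveI := sf_trim' (P := P) _ hGm0
  have hC0 : ∀ e, 0 ≤ C e := fun e => le_trans (abs_nonneg _) (hgC e 0)
  have hf_m : Measurable[m0] (fun ω => ∏ e ∈ s, g e (X e.1 e.2 ω)) :=
    Finset.measurable_prod _ fun e _ =>
      (measurable_of_countable (g e)).comp (hXmeas _ _)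
  have hf_int : Integrable (fun ω => ∏ e ∈ s, g e (X e.1 e.2 ω)) P := by
    refine integrable_of_ae_bdd' hf_m.aestronglyMeasurable (C := ∏ e ∈ s, C e) ?_
    refine Filter.Eventually.of_forall fun ω => ?_
    rw [Finset.abs_prod]
    exact Finset.prod_le_prod (fun e _ => abs_nonneg _) (fun e _ => hgC e _)
  have hh_mG : Measurable[GG X] (fun ω => ∏ e ∈ s,
      (P[fun ω' => g e (X e.1 e.2 ω')|GG X]) ω) :=
    Finset.measurable_prod _ fun e _ => stronglyMeasurable_condExp.measurable
  have hφbd : ∀ e ∈ s, ∀ᵐ ω ∂P, |(P[fun ω' => g e (X e.1 e.2 ω')|GG X]) ω| ≤ C e := by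
    intro e _
    have h1 : ∀ᵐ ω ∂P, |g e (X e.1 e.2 ω)| ≤ ((C e).toNNReal : ℝ) := by
      refine Filter.Eventually.of_forall fun ω => ?_
      rw [Real.coe_toNNReal _ (hC0 e)]; exact hgC _ _
    filter_upwards [ae_bdd_condExp_of_ae_bdd (m := GG X) h1] with ω h
    rwa [Real.coe_toNNReal _ (hC0 e)] at h
  have hh_bd : ∀ᵐ ω ∂P, |∏ e ∈ s, (P[fun ω' => g e (X e.1 e.2 ω')|GG X]) ω|
      ≤ ∏ e ∈ s, C e := by
    have hall : ∀ᵐ ω ∂P, ∀ e : ↥s,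
        |(P[fun ω' => g e.1 (X e.1.1 e.1.2 ω')|GG X]) ω| ≤ C e.1 :=
      MeasureTheory.ae_all_iff.2 fun e => hφbd e.1 e.2
    filter_upwards [hall] with ω h
    rw [Finset.abs_prod]
    refine Finset.prod_le_prod (fun e _ => abs_nonneg _) (fun e he => h ⟨e, he⟩)
  have hh_int : Integrable (fun ω => ∏ e ∈ s,
      (P[fun ω' => g e (X e.1 e.2 ω')|GG X]) ω) P :=
    integrable_of_ae_bdd' ((hh_mG.mono hGm0 le_rfl).stronglyMeasurable).aestronglyMeasurable hh_bd
  refine (ae_eq_condExp_of_forall_setIntegral_eq hGm0 hf_int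
    (fun A hA hAfin => hh_int.integrableOn)
    (fun A hA hAfin => ?_)
    (hh_mG.stronglyMeasurable.aestronglyMeasurable)).symm
  -- set-integral identity from prod_formula with Z = indicator
  have hAm0 : MeasurableSet A := hGm0 A hA
  have hZm : Measurable[GG X] (A.indicator (fun _ => (1:ℝ))) :=
    measurable_const.indicator hA
  have hprod := prod_formula X P hXmeas hsymm hexch g C hgC s.card s rfl hpos hnorm
    (A.indicator (fun _ => (1:ℝ))) 1 hZm
    (Filter.Eventually.of_forall fun ω => by
      by_cases h : ω ∈ A <;> simp [Set.indicator_apply, h])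
  have h1 : (fun ω => (∏ e ∈ s, g e (X e.1 e.2 ω)) * A.indicator (fun _ => (1:ℝ)) ω)
      = A.indicator (fun ω => ∏ e ∈ s, g e (X e.1 e.2 ω)) := by
    funext ω; by_cases h : ω ∈ A <;> simp [Set.indicator_apply, h]
  have h2 : (fun ω => (∏ e ∈ s, (P[fun ω' => g e (X e.1 e.2 ω')|GG X]) ω)
        * A.indicator (fun _ => (1:ℝ)) ω)
      = A.indicator (fun ω => ∏ e ∈ s, (P[fun ω' => g e (X e.1 e.2 ω')|GG X]) ω) := by
    funext ω; by_cases h : ω ∈ A <;> simp [Set.indicator_apply, h]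
  rw [h1, h2] at hprod
  rw [← integral_indicator hAm0, ← integral_indicator hAm0]
  exact hprod.symm

end Arrays


end ECI

/-- For an exchangeable array indexed by `ℤ ∖ {0}`, the entries `(X(i,j))_{1 ≤ i ≤ j}`
are conditionally independent given the σ-algebra generated by
`(X(i,j) : i < 0, j ∈ ℤ ∖ {0})`. -/
theorem edges_condIndep_given_negative_rows
    {Ω : Type*} [MeasurableSpace Ω] (P : Measure Ω) [IsProbabilityMeasure P]
    (X : NZ → NZ → Ω → ℕ) (hXmeas : ∀ i j, Measurable (X i j))
    (hsymm : ∀ᵐ ω ∂P, ∀ i j, X i j ω = X j i ω)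
    (heven : ∀ᵐ ω ∂P, ∀ i, Even (X i i ω))
    -- exchangeability under finitely supported permutations of `ℤ ∖ {0}`
    (hexch : ∀ τ : Equiv.Perm NZ, {x | τ x ≠ x}.Finite →
      Measure.map (fun ω => fun p : NZ × NZ => X (τ p.1) (τ p.2) ω) P =
        Measure.map (fun ω => fun p : NZ × NZ => X p.1 p.2 ω) P) :
    CondIndepFam
      (MeasurableSpace.comap
        (fun ω => fun p : NegZ × NZ => X (negToNZ p.1) p.2 ω) inferInstance)
      (fun (q : {q : PosZ × PosZ // q.1.1 ≤ q.2.1}) (ω : Ω) =>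
        X (posToNZ q.1.1) (posToNZ q.1.2) ω) P := by
  classical
  intro s g hgm hgb
  -- translation between index types
  set eMap : {q : PosZ × PosZ // q.1.1 ≤ q.2.1} → NZ × NZ :=
    fun v => (posToNZ v.1.1, posToNZ v.1.2) with heMap
  have hinj : ∀ v ∈ s, ∀ w ∈ s, eMap v = eMap w → v = w := by
    intro v _ w _ h
    have h1 : v.1.1.1 = w.1.1.1 := congrArg (fun p : NZ × NZ => p.1.1) h
    have h2 : v.1.2.1 = w.1.2.1 := congrArg (fun p : NZ × NZ => p.2.1) h
    exact Subtype.ext (Prod.ext (Subtype.ext h1) (Subtype.ext h2))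
  set invMap : NZ × NZ → {q : PosZ × PosZ // q.1.1 ≤ q.2.1} := fun e =>
    if h : 0 < e.1.1 ∧ 0 < e.2.1 ∧ e.1.1 ≤ e.2.1 then
      ⟨(⟨e.1.1, h.1⟩, ⟨e.2.1, h.2.1⟩), h.2.2⟩
    else ⟨(⟨1, one_pos⟩, ⟨1, one_pos⟩), le_rfl⟩ with hinv
  have hinv_eMap : ∀ v, invMap (eMap v) = v := by
    intro v
    have hcond : 0 < (eMap v).1.1 ∧ 0 < (eMap v).2.1 ∧ (eMap v).1.1 ≤ (eMap v).2.1 :=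
      ⟨v.1.1.2, v.1.2.2, v.2⟩
    rw [hinv]
    simp only [dif_pos hcond]
    exact Subtype.ext (Prod.ext (Subtype.ext rfl) (Subtype.ext rfl))
  set g' : NZ × NZ → ℕ → ℝ := fun e => g (invMap e) with hg'
  set C' : NZ × NZ → ℝ := fun e => (hgb (invMap e)).choose with hC'
  have hg'C : ∀ e x, |g' e x| ≤ C' e := by
    intro e x
    have := (hgb (invMap e)).choose_spec x
    rwa [Real.norm_eq_abs] at this
  set S : Finset (NZ × NZ) := s.image eMap with hS
  have hpos : ∀ e ∈ S, 0 < e.1.1 ∧ 0 < e.2.1 := by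
    intro e he
    obtain ⟨v, _, rfl⟩ := Finset.mem_image.1 he
    exact ⟨v.1.1.2, v.1.2.2⟩
  have hnorm : ∀ e ∈ S, e.1.1 ≤ e.2.1 := by
    intro e he
    obtain ⟨v, _, rfl⟩ := Finset.mem_image.1 he
    exact v.2
  have hmain := ECI.condexp_prod X P hXmeas hsymm hexch g' C' hg'C S hpos hnorm
  -- identify the integrands
  have hfun1 : (fun ω => ∏ v ∈ s, g v (X (posToNZ v.1.1) (posToNZ v.1.2) ω))
      = fun ω => ∏ e ∈ S, g' e (X e.1 e.2 ω) := by
    funext ω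
    rw [hS, Finset.prod_image hinj]
    refine Finset.prod_congr rfl fun v _ => ?_
    simp [hg', hinv_eMap v]; rfl
  have hfun2 : ∀ v, (fun ω' => g v (X (posToNZ v.1.1) (posToNZ v.1.2) ω'))
      = fun ω' => g' (eMap v) (X (eMap v).1 (eMap v).2 ω') := by
    intro v
    funext ω'
    simp [hg', hinv_eMap v]; rfl
  show P[(fun ω => ∏ v ∈ s, g v (X (posToNZ v.1.1) (posToNZ v.1.2) ω))|ECI.GG X]
      =ᵐ[P] fun ω => ∏ v ∈ s,
        (P[fun ω' => g v (X (posToNZ v.1.1) (posToNZ v.1.2) ω')|ECI.GG X]) ω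
  rw [hfun1]
  refine hmain.trans ?_
  refine Filter.EventuallyEq.of_eq ?_
  funext ω
  rw [hS, Finset.prod_image hinj]
  refine Finset.prod_congr rfl fun v _ => ?_
  rw [hfun2 v]
end
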